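/- arXiv:2408.02476 — 7 statements merged into one kernel-verified Lean document; each statement's English description precedes it below -/
import Mathlib

section
/- For every x ∈ ℝ₊^{2k} and every I ∈ 𝓘_k: ∫_{[0,δ]^I} ∫_{[0,δ]^{I^c}} ( Σ_{(J,M)∈𝒥_k} p_{J,M}(x − ι_I u, x − ι_{I^c} u') · ∫_{[0,Δ]^J} 𝒱(x − ι_I u + ι_J β) · 1{x − ι_I u + ι_J β ∈ ℝ₊^{2k}} · ∏_{j∈J} h((x − ι_I u)_j, β_j) dβ ) ∏_{i∈I} g(u_i) du ∏_{i'∈I^c} g(u'_{i'}) du' ≤ (1 + ε₁) 𝒱(x), where ε₁ = (1 + 𝓛(g)(λ₀)) Λ(λ₀, L) − 1. (This is statement (ii) of Assumption (S_{2.2}) for the Lyapunov function 𝒱 of Proposition 5.1, written with the explicit shortening and lengthening kernels.) -/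
open MeasureTheory Finset

noncomputable section

/-- The set `𝓘_k` of admissible shortening index sets. -/
def Ik (k : ℕ) : Finset (Finset (Fin (2*k))) :=
  Finset.univ.filter fun I =>
    I.card = k ∧ ∀ i ∈ I, ∀ j ∈ I, i ≠ j → (i : ℕ) % k ≠ (j : ℕ) % k

/-- The set `𝒥_k` of pairs of nonempty lengthening index sets. -/
def Jk (k : ℕ) : Finset (Finset (Fin (2*k)) × Finset (Fin (2*k))) :=
  Finset.univ.filter fun JM => JM.1.Nonempty ∧ JM.2.Nonempty

/-- `ι_S u` : the extension by zero of a vector indexed by `S`. -/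
def emb {k : ℕ} (S : Finset (Fin (2*k))) (u : {i // i ∈ S} → ℝ) : Fin (2*k) → ℝ :=
  fun i => if h : i ∈ S then u ⟨i, h⟩ else 0

/-- The set `𝓔_L(x)` of "large" coordinates. -/
def EL {k : ℕ} (Bmax Δ δ : ℝ) (L : ℕ) (x : Fin (2*k) → ℝ) : Finset (Fin (2*k)) :=
  Finset.univ.filter fun i => Bmax * (L : ℝ) - 2*Δ - δ < x i

/-- The one-dimensional factor `v` of the Lyapunov function. -/
def vfun (lam0 Bmax Δ δ : ℝ) (L : ℕ) (y : ℝ) : ℝ :=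
  Real.exp (lam0 * max (y - Bmax * (L : ℝ) + Δ + δ) 0)

/-- The Lyapunov function `𝒱`. -/
def Vfun {k : ℕ} (lam0 Bmax Δ δ : ℝ) (L : ℕ) (x : Fin (2*k) → ℝ) : ℝ :=
  ∏ i, vfun lam0 Bmax Δ δ L (x i)

/-- The quantity `Λ(λ, L)`. -/
def Lambda (k : ℕ) (Bmax Δ δ : ℝ)
    (p : Finset (Fin (2*k)) × Finset (Fin (2*k)) → (Fin (2*k) → ℝ) → (Fin (2*k) → ℝ) → ℝ)
    (h : ℝ → ℝ → ℝ) (lam : ℝ) (L : ℕ) : ℝ :=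
  ⨆ rs : (Fin (2*k) → ℝ) × (Fin (2*k) → ℝ),
    ∑ JM ∈ Jk k, p JM rs.1 rs.2 *
      ∏ i ∈ JM.1 ∩ EL Bmax Δ δ L rs.1,
        ∫ u in Set.Ioi (0:ℝ), Real.exp (lam * u) * h (rs.1 i) u

/-- Auxiliary: the lengthening moment `∫_{(0,∞)} e^{λ₀ u} h(y,u) du`. -/
def cInt (lam0 : ℝ) (h : ℝ → ℝ → ℝ) (y : ℝ) : ℝ :=
  ∫ u in Set.Ioi (0:ℝ), Real.exp (lam0 * u) * h y u

lemma myIntOn {f : ℝ → ℝ} (h1 : ∫ u in Set.Ioi (0:ℝ), f u = 1) :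
    MeasureTheory.IntegrableOn f (Set.Ioi 0) := by
  by_contra hc
  rw [MeasureTheory.integral_undef hc] at h1
  exact one_ne_zero h1.symm

lemma myVanInt {f : ℝ → ℝ} {a : ℝ} (hvan : ∀ b, b ∉ Set.Icc (0:ℝ) a → f b = 0)
    (hint : MeasureTheory.IntegrableOn f (Set.Ioi 0)) :
    MeasureTheory.Integrable f ∧ ∫ b, f b = ∫ b in Set.Ioi (0:ℝ), f b := by
  have h1 : f = Set.indicator (Set.Ici (0:ℝ)) f := by
    funext b
    by_cases hb : b ∈ Set.Ici (0:ℝ)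
    · rw [Set.indicator_of_mem hb]
    · rw [Set.indicator_of_notMem hb]
      exact hvan b fun hb' => hb hb'.1
  have h2 : MeasureTheory.IntegrableOn f (Set.Ici 0) :=
    (integrableOn_Ici_iff_integrableOn_Ioi (f := f) (b := 0) enorm_ne_top).2 hint
  constructor
  · rw [h1]; exact (MeasureTheory.integrable_indicator_iff measurableSet_Ici).2 h2
  · conv_lhs => rw [h1]
    rw [MeasureTheory.integral_indicator measurableSet_Ici]
    exact MeasureTheory.integral_Ici_eq_integral_Ioi

lemma myBoxProd {ι : Type*} [Fintype ι] (c : ι → ℝ → ℝ) (a : ℝ)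
    (hzero : ∀ j b, b ∉ Set.Icc (0:ℝ) a → c j b = 0) :
    ∫ β : ι → ℝ in Set.univ.pi fun _ => Set.Icc (0:ℝ) a, ∏ j, c j (β j) =
      ∏ j, ∫ b, c j b := by
  rw [MeasureTheory.setIntegral_eq_integral_of_forall_compl_eq_zero,
    MeasureTheory.integral_fintype_prod_volume_eq_prod]
  intro β hβ
  simp only [Set.mem_pi, Set.mem_univ, forall_true_left, not_forall] at hβ
  obtain ⟨j, hj⟩ := hβ
  exact Finset.prod_eq_zero (Finset.mem_univ j) (hzero j (β j) hj)

lemma myProdIf {n : ℕ} (J E : Finset (Fin n)) (f : Fin n → ℝ) :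
    (∏ j : {i // i ∈ J}, if (j : Fin n) ∈ E then f j else 1) = ∏ i ∈ J ∩ E, f i := by
  classical
  rw [← Finset.prod_ite_mem J E f]
  exact Finset.prod_coe_sort J (fun i => if i ∈ E then f i else 1)

theorem statement0
    (k : ℕ) (hk : 0 < k)
    (δ Δ Bmax : ℝ) (hδ : 0 < δ) (hΔ : 0 < Δ) (hB : Δ + δ < Bmax)
    (p : Finset (Fin (2*k)) × Finset (Fin (2*k)) → (Fin (2*k) → ℝ) → (Fin (2*k) → ℝ) → ℝ)
    (hp_meas : ∀ JM, Measurable fun rs : (Fin (2*k) → ℝ) × (Fin (2*k) → ℝ) => p JM rs.1 rs.2)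
    (hp_mem : ∀ JM ∈ Jk k, ∀ r s : Fin (2*k) → ℝ, p JM r s ∈ Set.Icc (0:ℝ) 1)
    (hp_sum : ∀ r s : Fin (2*k) → ℝ, ∑ JM ∈ Jk k, p JM r s = 1)
    (Δx : ℝ → ℝ) (hΔx : ∀ x, Δx x ∈ Set.Ioc (0:ℝ) Δ)
    (h : ℝ → ℝ → ℝ)
    (hh_meas : Measurable (Function.uncurry h))
    (hh_nonneg : ∀ x u, 0 ≤ h x u)
    (hh_int : ∀ x, ∫ u in Set.Ioi (0:ℝ), h x u = 1)
    (hh_supp : ∀ x u, u ∉ Set.Icc (0:ℝ) (Δx x) → h x u = 0)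
    (g : ℝ → ℝ) (hg_meas : Measurable g) (hg_nonneg : ∀ u, 0 ≤ g u)
    (hg_int : ∫ u in Set.Ioi (0:ℝ), g u = 1)
    (hg_supp : ∀ u, u ∉ Set.Icc (0:ℝ) δ → g u = 0)
    (lam0 : ℝ) (hlam0 : 0 < lam0) (L : ℕ) (hL : 0 < L)
    (ε₁ : ℝ)
    (hε₁ : ε₁ = (1 + ∫ u in Set.Ioi (0:ℝ), Real.exp (-lam0 * u) * g u) *
        Lambda k Bmax Δ δ p h lam0 L - 1)
    (x : Fin (2*k) → ℝ) (hx : ∀ i, 0 ≤ x i)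
    (I : Finset (Fin (2*k))) (hI : I ∈ Ik k) :
    (∫ u : {i // i ∈ I} → ℝ in Set.univ.pi fun _ => Set.Icc (0:ℝ) δ,
      (∫ u' : {i // i ∈ Iᶜ} → ℝ in Set.univ.pi fun _ => Set.Icc (0:ℝ) δ,
        (∑ JM ∈ Jk k,
          p JM (x - emb I u) (x - emb Iᶜ u') *
            ∫ β : {i // i ∈ JM.1} → ℝ in Set.univ.pi fun _ => Set.Icc (0:ℝ) Δ,
              (Vfun lam0 Bmax Δ δ L (x - emb I u + emb JM.1 β) *
                  Set.indicator {y : Fin (2*k) → ℝ | ∀ i, 0 ≤ y i} (fun _ => (1:ℝ))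
                    (x - emb I u + emb JM.1 β)) *
                ∏ j : {i // i ∈ JM.1}, h ((x - emb I u) j.1) (β j)) *
          ∏ i' : {i // i ∈ Iᶜ}, g (u' i')) *
        ∏ i : {i // i ∈ I}, g (u i)) ≤
      (1 + ε₁) * Vfun lam0 Bmax Δ δ L x := by
  classical
  -- basic facts about h
  have hΔxle : ∀ y, Δx y ≤ Δ := fun y => (hΔx y).2
  have hhm : ∀ y : ℝ, Measurable (h y) := fun y =>
    hh_meas.comp (measurable_const.prodMk measurable_id)
  have hvanh : ∀ y b, b ∉ Set.Icc (0:ℝ) Δ → h y b = 0 := fun y b hb =>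
    hh_supp y b fun hb' => hb ⟨hb'.1, hb'.2.trans (hΔxle y)⟩
  have hh_full : ∀ y, Integrable (h y) := fun y =>
    (myVanInt (hvanh y) (myIntOn (hh_int y))).1
  have hh_fullint : ∀ y, ∫ b, h y b = 1 := fun y =>
    (myVanInt (hvanh y) (myIntOn (hh_int y))).2.trans (hh_int y)
  -- the function e^{λ₀ b} h y b
  have heh_le : ∀ y b, Real.exp (lam0 * b) * h y b ≤ Real.exp (lam0 * Δ) * h y b := by
    intro y b
    by_cases hb : b ≤ Δ
    · exact mul_le_mul_of_nonneg_right
        (Real.exp_le_exp.2 (mul_le_mul_of_nonneg_left hb hlam0.le)) (hh_nonneg y b)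
    · rw [hvanh y b fun hb' => hb hb'.2]; simp
  have hehm : ∀ y : ℝ, Measurable fun b => Real.exp (lam0 * b) * h y b := fun y =>
    ((measurable_const.mul measurable_id).exp).mul (hhm y)
  have heh_full : ∀ y, Integrable fun b => Real.exp (lam0 * b) * h y b := by
    intro y
    refine ((hh_full y).const_mul (Real.exp (lam0 * Δ))).mono'
      (hehm y).aestronglyMeasurable (Filter.Eventually.of_forall fun b => ?_)
    rw [Real.norm_of_nonneg (mul_nonneg (Real.exp_pos _).le (hh_nonneg y b))]
    exact heh_le y b
  have hvaneh : ∀ y b, b ∉ Set.Icc (0:ℝ) Δ → Real.exp (lam0 * b) * h y b = 0 :=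
    fun y b hb => by rw [hvanh y b hb, mul_zero]
  have hc_eq : ∀ y, ∫ b, Real.exp (lam0 * b) * h y b = cInt lam0 h y := fun y =>
    (myVanInt (hvaneh y) (heh_full y).integrableOn).2
  have hc_nonneg : ∀ y, 0 ≤ cInt lam0 h y := fun y =>
    MeasureTheory.setIntegral_nonneg measurableSet_Ioi fun b _ =>
      mul_nonneg (Real.exp_pos _).le (hh_nonneg y b)
  have hc_le : ∀ y, cInt lam0 h y ≤ Real.exp (lam0 * Δ) := by
    intro y
    have h1 : cInt lam0 h y ≤ ∫ b in Set.Ioi (0:ℝ), Real.exp (lam0 * Δ) * h y b :=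
      MeasureTheory.integral_mono (heh_full y).integrableOn
        (((hh_full y).const_mul (Real.exp (lam0 * Δ))).integrableOn)
        (fun b => heh_le y b)
    rwa [MeasureTheory.integral_const_mul, hh_int y, mul_one] at h1
  -- basic facts about g
  have hg_full : Integrable g := (myVanInt hg_supp (myIntOn hg_int)).1
  have hg_fullint : ∫ b, g b = 1 := (myVanInt hg_supp (myIntOn hg_int)).2.trans hg_int
  -- facts about v, V
  have hv_pos : ∀ y, 0 < vfun lam0 Bmax Δ δ L y := fun y => Real.exp_pos _
  have hv_one : ∀ y, 1 ≤ vfun lam0 Bmax Δ δ L y := fun y =>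
    Real.one_le_exp (mul_nonneg hlam0.le (le_max_right _ _))
  have hv_mono : ∀ {y z : ℝ}, y ≤ z →
      vfun lam0 Bmax Δ δ L y ≤ vfun lam0 Bmax Δ δ L z := by
    intro y z hyz
    exact Real.exp_le_exp.2 (mul_le_mul_of_nonneg_left
      (max_le_max (by linarith) le_rfl) hlam0.le)
  have hV_nonneg : ∀ z : Fin (2*k) → ℝ, 0 ≤ Vfun lam0 Bmax Δ δ L z := fun z =>
    Finset.prod_nonneg fun i _ => (hv_pos _).le
  -- facts about Λ
  have hp0 : ∀ JM ∈ Jk k, ∀ r s : Fin (2*k) → ℝ, 0 ≤ p JM r s :=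
    fun JM hJM r s => (hp_mem JM hJM r s).1
  have hprod_le : ∀ (r : Fin (2*k) → ℝ) (S : Finset (Fin (2*k))),
      (∏ i ∈ S, cInt lam0 h (r i)) ≤ Real.exp (lam0 * Δ) ^ (2*k) := by
    intro r S
    calc (∏ i ∈ S, cInt lam0 h (r i)) ≤ ∏ _i ∈ S, Real.exp (lam0 * Δ) :=
        Finset.prod_le_prod (fun i _ => hc_nonneg _) (fun i _ => hc_le _)
      _ = Real.exp (lam0 * Δ) ^ S.card := Finset.prod_const _
      _ ≤ Real.exp (lam0 * Δ) ^ (2*k) :=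
        pow_le_pow_right₀ (Real.one_le_exp (mul_nonneg hlam0.le hΔ.le))
          (le_trans (Finset.card_le_univ S) (by simp))
  have hbdd : BddAbove (Set.range fun rs : (Fin (2*k) → ℝ) × (Fin (2*k) → ℝ) =>
      ∑ JM ∈ Jk k, p JM rs.1 rs.2 *
        ∏ i ∈ JM.1 ∩ EL Bmax Δ δ L rs.1, cInt lam0 h (rs.1 i)) := by
    refine ⟨Real.exp (lam0 * Δ) ^ (2*k), Set.forall_mem_range.2 fun rs => ?_⟩
    calc (∑ JM ∈ Jk k, p JM rs.1 rs.2 *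
          ∏ i ∈ JM.1 ∩ EL Bmax Δ δ L rs.1, cInt lam0 h (rs.1 i))
        ≤ ∑ JM ∈ Jk k, p JM rs.1 rs.2 * Real.exp (lam0 * Δ) ^ (2*k) :=
          Finset.sum_le_sum fun JM hJM =>
            mul_le_mul_of_nonneg_left (hprod_le rs.1 _) (hp0 JM hJM rs.1 rs.2)
      _ = Real.exp (lam0 * Δ) ^ (2*k) := by rw [← Finset.sum_mul, hp_sum, one_mul]
  have hΛ_ge : ∀ r s : Fin (2*k) → ℝ,
      (∑ JM ∈ Jk k, p JM r s * ∏ i ∈ JM.1 ∩ EL Bmax Δ δ L r, cInt lam0 h (r i))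
        ≤ Lambda k Bmax Δ δ p h lam0 L := by
    intro r s
    exact le_ciSup hbdd (r, s)
  have hΛ0 : 0 ≤ Lambda k Bmax Δ δ p h lam0 L := by
    refine Real.iSup_nonneg fun rs => Finset.sum_nonneg fun JM hJM =>
      mul_nonneg (hp0 JM hJM rs.1 rs.2) (Finset.prod_nonneg fun i _ => hc_nonneg _)
  -- the key bound on the β-integral
  have hT : ∀ (r : Fin (2*k) → ℝ) (J : Finset (Fin (2*k))),
      (∫ β : {i // i ∈ J} → ℝ in Set.univ.pi fun _ => Set.Icc (0:ℝ) Δ,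
        (Vfun lam0 Bmax Δ δ L (r + emb J β) *
            Set.indicator {y : Fin (2*k) → ℝ | ∀ i, 0 ≤ y i} (fun _ => (1:ℝ))
              (r + emb J β)) *
          ∏ j : {i // i ∈ J}, h (r j.1) (β j))
        ≤ Vfun lam0 Bmax Δ δ L r *
            ∏ i ∈ J ∩ EL Bmax Δ δ L r, cInt lam0 h (r i) := by
    intro r J
    have hcc_int : ∀ j : {i // i ∈ J}, Integrable fun b =>
        (if (j : Fin (2*k)) ∈ EL Bmax Δ δ L r then Real.exp (lam0 * b) else 1) *
          h (r j.1) b := by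
      intro j
      by_cases hj : (j : Fin (2*k)) ∈ EL Bmax Δ δ L r
      · simp only [if_pos hj]; exact heh_full (r j.1)
      · simp only [if_neg hj, one_mul]; exact hh_full (r j.1)
    have hcc_van : ∀ (j : {i // i ∈ J}) b, b ∉ Set.Icc (0:ℝ) Δ →
        (if (j : Fin (2*k)) ∈ EL Bmax Δ δ L r then Real.exp (lam0 * b) else 1) *
          h (r j.1) b = 0 := by
      intro j b hb; rw [hvanh _ b hb, mul_zero]
    have hcc_val : ∀ j : {i // i ∈ J},
        (∫ b, (if (j : Fin (2*k)) ∈ EL Bmax Δ δ L r then Real.exp (lam0 * b) else 1) *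
          h (r j.1) b) =
        (if (j : Fin (2*k)) ∈ EL Bmax Δ δ L r then cInt lam0 h (r j.1) else 1) := by
      intro j
      by_cases hj : (j : Fin (2*k)) ∈ EL Bmax Δ δ L r
      · simp only [if_pos hj]; exact hc_eq (r j.1)
      · simp only [if_neg hj, one_mul]; exact hh_fullint (r j.1)
    have hbox : MeasurableSet (Set.univ.pi fun _ : {i // i ∈ J} => Set.Icc (0:ℝ) Δ) :=
      MeasurableSet.univ_pi fun _ => measurableSet_Icc
    have hD_int : IntegrableOn
        (fun β : {i // i ∈ J} → ℝ => Vfun lam0 Bmax Δ δ L r *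
          ∏ j : {i // i ∈ J},
            (if (j : Fin (2*k)) ∈ EL Bmax Δ δ L r then Real.exp (lam0 * β j) else 1) *
              h (r j.1) (β j))
        (Set.univ.pi fun _ : {i // i ∈ J} => Set.Icc (0:ℝ) Δ) :=
      ((MeasureTheory.Integrable.fintype_prod hcc_int).const_mul _).integrableOn
    have step1 : (∫ β : {i // i ∈ J} → ℝ in Set.univ.pi fun _ => Set.Icc (0:ℝ) Δ,
        (Vfun lam0 Bmax Δ δ L (r + emb J β) *
            Set.indicator {y : Fin (2*k) → ℝ | ∀ i, 0 ≤ y i} (fun _ => (1:ℝ))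
              (r + emb J β)) *
          ∏ j : {i // i ∈ J}, h (r j.1) (β j))
        ≤ ∫ β : {i // i ∈ J} → ℝ in Set.univ.pi fun _ => Set.Icc (0:ℝ) Δ,
          Vfun lam0 Bmax Δ δ L r *
            ∏ j : {i // i ∈ J},
              (if (j : Fin (2*k)) ∈ EL Bmax Δ δ L r then Real.exp (lam0 * β j) else 1) *
                h (r j.1) (β j) := by
      refine integral_mono_of_nonneg (Filter.Eventually.of_forall fun β => ?_) hD_int ?_
      · exact mul_nonneg (mul_nonneg (hV_nonneg _)
          (Set.indicator_nonneg (fun _ _ => zero_le_one) _))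
          (Finset.prod_nonneg fun j _ => hh_nonneg _ _)
      · filter_upwards [MeasureTheory.ae_restrict_mem hbox] with β hβ
        have hβ' : ∀ j : {i // i ∈ J}, β j ∈ Set.Icc (0:ℝ) Δ := fun j =>
          hβ j (Set.mem_univ j)
        -- pointwise bound on V
        have hVb : Vfun lam0 Bmax Δ δ L (r + emb J β) ≤
            Vfun lam0 Bmax Δ δ L r *
              ∏ j : {i // i ∈ J},
                (if (j : Fin (2*k)) ∈ EL Bmax Δ δ L r then Real.exp (lam0 * β j) else 1) := by
          have h1 : ∀ i : Fin (2*k), vfun lam0 Bmax Δ δ L ((r + emb J β) i) ≤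
              vfun lam0 Bmax Δ δ L (r i) *
                (if i ∈ J then
                  (if i ∈ EL Bmax Δ δ L r then Real.exp (lam0 * emb J β i) else 1)
                 else 1) := by
            intro i
            by_cases hiJ : i ∈ J
            · rw [if_pos hiJ]
              have hei : emb J β i = β ⟨i, hiJ⟩ := dif_pos hiJ
              have hβi : emb J β i ∈ Set.Icc (0:ℝ) Δ := by rw [hei]; exact hβ' ⟨i, hiJ⟩
              by_cases hiE : i ∈ EL Bmax Δ δ L r
              · rw [if_pos hiE]
                have hmax : max ((r + emb J β) i - Bmax * (L:ℝ) + Δ + δ) 0 ≤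
                    max (r i - Bmax * (L:ℝ) + Δ + δ) 0 + emb J β i := by
                  have h2 := le_max_left (r i - Bmax * (L:ℝ) + Δ + δ) 0
                  have h3 := le_max_right (r i - Bmax * (L:ℝ) + Δ + δ) 0
                  have h4 : (r + emb J β) i = r i + emb J β i := rfl
                  refine max_le ?_ (add_nonneg h3 hβi.1)
                  rw [h4]; linarith
                calc vfun lam0 Bmax Δ δ L ((r + emb J β) i)
                    ≤ Real.exp (lam0 * (max (r i - Bmax * (L:ℝ) + Δ + δ) 0 + emb J β i)) :=
                      Real.exp_le_exp.2 (mul_le_mul_of_nonneg_left hmax hlam0.le)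
                  _ = vfun lam0 Bmax Δ δ L (r i) * Real.exp (lam0 * emb J β i) := by
                      rw [mul_add, Real.exp_add]; rfl
              · rw [if_neg hiE, mul_one]
                have hri : ¬(Bmax * (L:ℝ) - 2*Δ - δ < r i) := by
                  simpa [EL] using hiE
                have hzero : max ((r + emb J β) i - Bmax * (L:ℝ) + Δ + δ) 0 = 0 := by
                  have h4 : (r + emb J β) i = r i + emb J β i := rfl
                  refine max_eq_right ?_
                  rw [h4]
                  have := hβi.2
                  push_neg at hri
                  linarith
                calc vfun lam0 Bmax Δ δ L ((r + emb J β) i)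
                    = 1 := by unfold vfun; rw [hzero, mul_zero, Real.exp_zero]
                  _ ≤ vfun lam0 Bmax Δ δ L (r i) := hv_one _
            · rw [if_neg hiJ, mul_one]
              have hei : emb J β i = 0 := dif_neg hiJ
              have h4 : (r + emb J β) i = r i + emb J β i := rfl
              rw [show (r + emb J β) i = r i by rw [h4, hei, add_zero]]
          calc Vfun lam0 Bmax Δ δ L (r + emb J β)
              = ∏ i, vfun lam0 Bmax Δ δ L ((r + emb J β) i) := rfl
            _ ≤ ∏ i, (vfun lam0 Bmax Δ δ L (r i) *
                  (if i ∈ J then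
                    (if i ∈ EL Bmax Δ δ L r then Real.exp (lam0 * emb J β i) else 1)
                   else 1)) :=
                Finset.prod_le_prod (fun i _ => (hv_pos _).le) (fun i _ => h1 i)
            _ = Vfun lam0 Bmax Δ δ L r * ∏ i,
                  (if i ∈ J then
                    (if i ∈ EL Bmax Δ δ L r then Real.exp (lam0 * emb J β i) else 1)
                   else 1) := Finset.prod_mul_distrib
            _ = Vfun lam0 Bmax Δ δ L r * ∏ i ∈ J,
                  (if i ∈ EL Bmax Δ δ L r then Real.exp (lam0 * emb J β i) else 1) := by
                rw [← Finset.prod_filter]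
                congr 1
                apply Finset.prod_congr
                · ext i; simp
                · intros; rfl
            _ = Vfun lam0 Bmax Δ δ L r *
                ∏ j : {i // i ∈ J},
                  (if (j : Fin (2*k)) ∈ EL Bmax Δ δ L r then Real.exp (lam0 * β j) else 1) := by
                congr 1
                rw [← Finset.prod_coe_sort J
                  (fun i => if i ∈ EL Bmax Δ δ L r then Real.exp (lam0 * emb J β i) else 1)]
                refine Finset.prod_congr rfl fun j _ => ?_
                have hej : emb J β (j : Fin (2*k)) = β j := by
                  rw [emb, dif_pos j.2]
                rw [hej]
        have hind : Set.indicator {y : Fin (2*k) → ℝ | ∀ i, 0 ≤ y i} (fun _ => (1:ℝ))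
            (r + emb J β) ≤ 1 := by
          by_cases hz : (r + emb J β) ∈ {y : Fin (2*k) → ℝ | ∀ i, 0 ≤ y i}
          · rw [Set.indicator_of_mem hz]
          · rw [Set.indicator_of_notMem hz]; exact zero_le_one
        have hind0 : 0 ≤ Set.indicator {y : Fin (2*k) → ℝ | ∀ i, 0 ≤ y i} (fun _ => (1:ℝ))
            (r + emb J β) := Set.indicator_nonneg (fun _ _ => zero_le_one) _
        calc (Vfun lam0 Bmax Δ δ L (r + emb J β) *
              Set.indicator {y : Fin (2*k) → ℝ | ∀ i, 0 ≤ y i} (fun _ => (1:ℝ))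
                (r + emb J β)) * ∏ j : {i // i ∈ J}, h (r j.1) (β j)
            ≤ Vfun lam0 Bmax Δ δ L (r + emb J β) * ∏ j : {i // i ∈ J}, h (r j.1) (β j) := by
              refine mul_le_mul_of_nonneg_right ?_
                (Finset.prod_nonneg fun j _ => hh_nonneg _ _)
              calc Vfun lam0 Bmax Δ δ L (r + emb J β) *
                    Set.indicator {y : Fin (2*k) → ℝ | ∀ i, 0 ≤ y i} (fun _ => (1:ℝ))
                      (r + emb J β)
                  ≤ Vfun lam0 Bmax Δ δ L (r + emb J β) * 1 :=
                    mul_le_mul_of_nonneg_left hind (hV_nonneg _)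
                _ = Vfun lam0 Bmax Δ δ L (r + emb J β) := mul_one _
          _ ≤ (Vfun lam0 Bmax Δ δ L r *
                ∏ j : {i // i ∈ J},
                  (if (j : Fin (2*k)) ∈ EL Bmax Δ δ L r then Real.exp (lam0 * β j) else 1)) *
                ∏ j : {i // i ∈ J}, h (r j.1) (β j) :=
              mul_le_mul_of_nonneg_right hVb
                (Finset.prod_nonneg fun j _ => hh_nonneg _ _)
          _ = Vfun lam0 Bmax Δ δ L r *
                ∏ j : {i // i ∈ J},
                  (if (j : Fin (2*k)) ∈ EL Bmax Δ δ L r then Real.exp (lam0 * β j) else 1) *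
                    h (r j.1) (β j) := by
              rw [mul_assoc, ← Finset.prod_mul_distrib]
    refine step1.trans ?_
    rw [MeasureTheory.integral_const_mul,
      myBoxProd (fun (j : {i // i ∈ J}) b =>
        (if (j : Fin (2*k)) ∈ EL Bmax Δ δ L r then Real.exp (lam0 * b) else 1) *
          h (r j.1) b) Δ hcc_van]
    refine le_of_eq ?_
    congr 1
    rw [← myProdIf J (EL Bmax Δ δ L r) (fun i => cInt lam0 h (r i))]
    exact Finset.prod_congr rfl fun j _ => hcc_val j
  -- the bound on the sum
  have hS : ∀ (u : {i // i ∈ I} → ℝ) (u' : {i // i ∈ Iᶜ} → ℝ),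
      (∑ JM ∈ Jk k,
        p JM (x - emb I u) (x - emb Iᶜ u') *
          ∫ β : {i // i ∈ JM.1} → ℝ in Set.univ.pi fun _ => Set.Icc (0:ℝ) Δ,
            (Vfun lam0 Bmax Δ δ L (x - emb I u + emb JM.1 β) *
                Set.indicator {y : Fin (2*k) → ℝ | ∀ i, 0 ≤ y i} (fun _ => (1:ℝ))
                  (x - emb I u + emb JM.1 β)) *
              ∏ j : {i // i ∈ JM.1}, h ((x - emb I u) j.1) (β j))
        ≤ Lambda k Bmax Δ δ p h lam0 L * Vfun lam0 Bmax Δ δ L (x - emb I u) := by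
    intro u u'
    calc (∑ JM ∈ Jk k,
          p JM (x - emb I u) (x - emb Iᶜ u') *
            ∫ β : {i // i ∈ JM.1} → ℝ in Set.univ.pi fun _ => Set.Icc (0:ℝ) Δ,
              (Vfun lam0 Bmax Δ δ L (x - emb I u + emb JM.1 β) *
                  Set.indicator {y : Fin (2*k) → ℝ | ∀ i, 0 ≤ y i} (fun _ => (1:ℝ))
                    (x - emb I u + emb JM.1 β)) *
                ∏ j : {i // i ∈ JM.1}, h ((x - emb I u) j.1) (β j))
        ≤ ∑ JM ∈ Jk k,
          p JM (x - emb I u) (x - emb Iᶜ u') *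
            (Vfun lam0 Bmax Δ δ L (x - emb I u) *
              ∏ i ∈ JM.1 ∩ EL Bmax Δ δ L (x - emb I u), cInt lam0 h ((x - emb I u) i)) :=
          Finset.sum_le_sum fun JM hJM =>
            mul_le_mul_of_nonneg_left (hT (x - emb I u) JM.1) (hp0 JM hJM _ _)
      _ = Vfun lam0 Bmax Δ δ L (x - emb I u) * ∑ JM ∈ Jk k,
            p JM (x - emb I u) (x - emb Iᶜ u') *
              ∏ i ∈ JM.1 ∩ EL Bmax Δ δ L (x - emb I u), cInt lam0 h ((x - emb I u) i) := by
          rw [Finset.mul_sum]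
          exact Finset.sum_congr rfl fun JM _ => by ring
      _ ≤ Vfun lam0 Bmax Δ δ L (x - emb I u) * Lambda k Bmax Δ δ p h lam0 L :=
          mul_le_mul_of_nonneg_left (hΛ_ge (x - emb I u) (x - emb Iᶜ u')) (hV_nonneg _)
      _ = Lambda k Bmax Δ δ p h lam0 L * Vfun lam0 Bmax Δ δ L (x - emb I u) := mul_comm _ _
  -- nonnegativity of the β-integrals
  have hT_nonneg : ∀ (u : {i // i ∈ I} → ℝ) (u' : {i // i ∈ Iᶜ} → ℝ),
      0 ≤ ∑ JM ∈ Jk k,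
        p JM (x - emb I u) (x - emb Iᶜ u') *
          ∫ β : {i // i ∈ JM.1} → ℝ in Set.univ.pi fun _ => Set.Icc (0:ℝ) Δ,
            (Vfun lam0 Bmax Δ δ L (x - emb I u + emb JM.1 β) *
                Set.indicator {y : Fin (2*k) → ℝ | ∀ i, 0 ≤ y i} (fun _ => (1:ℝ))
                  (x - emb I u + emb JM.1 β)) *
              ∏ j : {i // i ∈ JM.1}, h ((x - emb I u) j.1) (β j) := by
    intro u u'
    refine Finset.sum_nonneg fun JM hJM => mul_nonneg (hp0 JM hJM _ _) ?_
    refine MeasureTheory.integral_nonneg fun β => ?_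
    exact mul_nonneg (mul_nonneg (hV_nonneg _)
      (Set.indicator_nonneg (fun _ _ => zero_le_one) _))
      (Finset.prod_nonneg fun j _ => hh_nonneg _ _)
  -- the middle (u') integral bound
  have hMid : ∀ u : {i // i ∈ I} → ℝ,
      (∫ u' : {i // i ∈ Iᶜ} → ℝ in Set.univ.pi fun _ => Set.Icc (0:ℝ) δ,
        (∑ JM ∈ Jk k,
          p JM (x - emb I u) (x - emb Iᶜ u') *
            ∫ β : {i // i ∈ JM.1} → ℝ in Set.univ.pi fun _ => Set.Icc (0:ℝ) Δ,
              (Vfun lam0 Bmax Δ δ L (x - emb I u + emb JM.1 β) *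
                  Set.indicator {y : Fin (2*k) → ℝ | ∀ i, 0 ≤ y i} (fun _ => (1:ℝ))
                    (x - emb I u + emb JM.1 β)) *
                ∏ j : {i // i ∈ JM.1}, h ((x - emb I u) j.1) (β j)) *
          ∏ i' : {i // i ∈ Iᶜ}, g (u' i'))
        ≤ Lambda k Bmax Δ δ p h lam0 L * Vfun lam0 Bmax Δ δ L (x - emb I u) := by
    intro u
    have hdom : IntegrableOn
        (fun u' : {i // i ∈ Iᶜ} → ℝ =>
          (Lambda k Bmax Δ δ p h lam0 L * Vfun lam0 Bmax Δ δ L (x - emb I u)) *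
            ∏ i' : {i // i ∈ Iᶜ}, g (u' i'))
        (Set.univ.pi fun _ : {i // i ∈ Iᶜ} => Set.Icc (0:ℝ) δ) :=
      ((MeasureTheory.Integrable.fintype_prod fun _ => hg_full).const_mul _).integrableOn
    have step : (∫ u' : {i // i ∈ Iᶜ} → ℝ in Set.univ.pi fun _ => Set.Icc (0:ℝ) δ,
        (∑ JM ∈ Jk k,
          p JM (x - emb I u) (x - emb Iᶜ u') *
            ∫ β : {i // i ∈ JM.1} → ℝ in Set.univ.pi fun _ => Set.Icc (0:ℝ) Δ,
              (Vfun lam0 Bmax Δ δ L (x - emb I u + emb JM.1 β) *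
                  Set.indicator {y : Fin (2*k) → ℝ | ∀ i, 0 ≤ y i} (fun _ => (1:ℝ))
                    (x - emb I u + emb JM.1 β)) *
                ∏ j : {i // i ∈ JM.1}, h ((x - emb I u) j.1) (β j)) *
          ∏ i' : {i // i ∈ Iᶜ}, g (u' i'))
        ≤ ∫ u' : {i // i ∈ Iᶜ} → ℝ in Set.univ.pi fun _ => Set.Icc (0:ℝ) δ,
          (Lambda k Bmax Δ δ p h lam0 L * Vfun lam0 Bmax Δ δ L (x - emb I u)) *
            ∏ i' : {i // i ∈ Iᶜ}, g (u' i') := by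
      refine integral_mono_of_nonneg (Filter.Eventually.of_forall fun u' => ?_) hdom
        (Filter.Eventually.of_forall fun u' => ?_)
      · exact mul_nonneg (hT_nonneg u u') (Finset.prod_nonneg fun j _ => hg_nonneg _)
      · exact mul_le_mul_of_nonneg_right (hS u u')
          (Finset.prod_nonneg fun j _ => hg_nonneg _)
    refine step.trans ?_
    rw [MeasureTheory.integral_const_mul,
      myBoxProd (fun (_ : {i // i ∈ Iᶜ}) b => g b) δ (fun _ b hb => hg_supp b hb)]
    simp [hg_fullint]
  -- the outer (u) integral bound
  have hboxI : MeasurableSet (Set.univ.pi fun _ : {i // i ∈ I} => Set.Icc (0:ℝ) δ) :=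
    MeasurableSet.univ_pi fun _ => measurableSet_Icc
  have hdomI : IntegrableOn
      (fun u : {i // i ∈ I} → ℝ =>
        (Lambda k Bmax Δ δ p h lam0 L * Vfun lam0 Bmax Δ δ L x) *
          ∏ i : {i // i ∈ I}, g (u i))
      (Set.univ.pi fun _ : {i // i ∈ I} => Set.Icc (0:ℝ) δ) :=
    ((MeasureTheory.Integrable.fintype_prod fun _ => hg_full).const_mul _).integrableOn
  have stepO : (∫ u : {i // i ∈ I} → ℝ in Set.univ.pi fun _ => Set.Icc (0:ℝ) δ,
      (∫ u' : {i // i ∈ Iᶜ} → ℝ in Set.univ.pi fun _ => Set.Icc (0:ℝ) δ,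
        (∑ JM ∈ Jk k,
          p JM (x - emb I u) (x - emb Iᶜ u') *
            ∫ β : {i // i ∈ JM.1} → ℝ in Set.univ.pi fun _ => Set.Icc (0:ℝ) Δ,
              (Vfun lam0 Bmax Δ δ L (x - emb I u + emb JM.1 β) *
                  Set.indicator {y : Fin (2*k) → ℝ | ∀ i, 0 ≤ y i} (fun _ => (1:ℝ))
                    (x - emb I u + emb JM.1 β)) *
                ∏ j : {i // i ∈ JM.1}, h ((x - emb I u) j.1) (β j)) *
          ∏ i' : {i // i ∈ Iᶜ}, g (u' i')) *
        ∏ i : {i // i ∈ I}, g (u i))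
      ≤ ∫ u : {i // i ∈ I} → ℝ in Set.univ.pi fun _ => Set.Icc (0:ℝ) δ,
        (Lambda k Bmax Δ δ p h lam0 L * Vfun lam0 Bmax Δ δ L x) *
          ∏ i : {i // i ∈ I}, g (u i) := by
    refine integral_mono_of_nonneg (Filter.Eventually.of_forall fun u => ?_) hdomI ?_
    · refine mul_nonneg ?_ (Finset.prod_nonneg fun j _ => hg_nonneg _)
      refine MeasureTheory.integral_nonneg fun u' => ?_
      exact mul_nonneg (hT_nonneg u u') (Finset.prod_nonneg fun j _ => hg_nonneg _)
    · filter_upwards [MeasureTheory.ae_restrict_mem hboxI] with u hu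
      have hVle : Vfun lam0 Bmax Δ δ L (x - emb I u) ≤ Vfun lam0 Bmax Δ δ L x := by
        refine Finset.prod_le_prod (fun i _ => (hv_pos _).le) fun i _ => ?_
        refine hv_mono ?_
        have hei : 0 ≤ emb I u i := by
          rw [emb]
          by_cases hiI : i ∈ I
          · rw [dif_pos hiI]; exact (hu ⟨i, hiI⟩ (Set.mem_univ _)).1
          · rw [dif_neg hiI]
        have h4 : (x - emb I u) i = x i - emb I u i := rfl
        rw [h4]; linarith
      refine mul_le_mul_of_nonneg_right ?_ (Finset.prod_nonneg fun j _ => hg_nonneg _)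
      exact (hMid u).trans (mul_le_mul_of_nonneg_left hVle hΛ0)
  refine stepO.trans ?_
  rw [MeasureTheory.integral_const_mul,
    myBoxProd (fun (_ : {i // i ∈ I}) b => g b) δ (fun _ b hb => hg_supp b hb)]
  simp only [hg_fullint, Finset.prod_const_one, mul_one]
  have hL0 : 0 ≤ ∫ u in Set.Ioi (0:ℝ), Real.exp (-lam0 * u) * g u :=
    MeasureTheory.setIntegral_nonneg measurableSet_Ioi fun b _ =>
      mul_nonneg (Real.exp_pos _).le (hg_nonneg b)
  have hΛle : Lambda k Bmax Δ δ p h lam0 L ≤ 1 + ε₁ := by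
    rw [hε₁]
    nlinarith [hΛ0, hL0]
  exact mul_le_mul_of_nonneg_right hΛle (hV_nonneg x)
end
end

section
/- For every x ∈ ℝ₊^{2k} and all α₁, α₂ ∈ [0, δ]^{2k}: Σ_{(J,M)∈𝒥_k} p_{J,M}(x − α₁, x − α₂) · ∫_{[0,Δ]^J} 𝒱(x − α₁ + ι_J β) · ∏_{j∈J} h((x − α₁)_j, β_j) dβ ≤ 𝒱(x − α₁) · Λ(λ₀, L). (Step 1 inequality in the proof of Proposition 5.1.) -/
open MeasureTheory Finset

noncomputable section

/-! ### Auxiliary lemmas -/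

lemma vfun_pos (lam0 Bmax Δ δ : ℝ) (L : ℕ) (y : ℝ) : 0 < vfun lam0 Bmax Δ δ L y :=
  Real.exp_pos _

lemma vfun_meas (lam0 Bmax Δ δ : ℝ) (L : ℕ) : Measurable (vfun lam0 Bmax Δ δ L) := by
  unfold vfun; fun_prop

lemma one_le_vfun (lam0 Bmax Δ δ : ℝ) (L : ℕ) (hlam0 : 0 ≤ lam0) (y : ℝ) :
    1 ≤ vfun lam0 Bmax Δ δ L y :=
  Real.one_le_exp (mul_nonneg hlam0 (le_max_right _ _))

lemma vfun_add_le (lam0 Bmax Δ δ : ℝ) (L : ℕ) (hlam0 : 0 ≤ lam0) (y u : ℝ) (hu : 0 ≤ u) :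
    vfun lam0 Bmax Δ δ L (y + u) ≤ vfun lam0 Bmax Δ δ L y * Real.exp (lam0 * u) := by
  rw [vfun, vfun, ← Real.exp_add, ← mul_add]
  refine Real.exp_le_exp.2 (mul_le_mul_of_nonneg_left ?_ hlam0)
  refine max_le (by linarith [le_max_left (y - Bmax * (L:ℝ) + Δ + δ) 0]) ?_
  exact add_nonneg (le_max_right _ _) hu

lemma vfun_eq_one (lam0 Bmax Δ δ : ℝ) (L : ℕ) (y : ℝ) (hy : y - Bmax * (L:ℝ) + Δ + δ ≤ 0) :
    vfun lam0 Bmax Δ δ L y = 1 := by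
  rw [vfun, max_eq_right hy, mul_zero, Real.exp_zero]

section hfacts
variable {Δ δ lam0 Bmax : ℝ} {Δx : ℝ → ℝ} {h : ℝ → ℝ → ℝ} {L : ℕ}
variable (hlam0 : 0 < lam0)
  (hΔx : ∀ x, Δx x ∈ Set.Ioc (0:ℝ) Δ)
  (hh_meas : Measurable (Function.uncurry h))
  (hh_nonneg : ∀ x u, 0 ≤ h x u)
  (hh_int : ∀ x, ∫ u in Set.Ioi (0:ℝ), h x u = 1)
  (hh_supp : ∀ x u, u ∉ Set.Icc (0:ℝ) (Δx x) → h x u = 0)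

include hh_int in
lemma h_intOn (r : ℝ) : IntegrableOn (h r) (Set.Ioi (0:ℝ)) :=
  integrable_of_integral_eq_one (hh_int r)

include hlam0 hΔx hh_nonneg hh_supp in
lemma exp_h_le (r u : ℝ) :
    Real.exp (lam0 * u) * h r u ≤ Real.exp (lam0 * Δ) * h r u := by
  rcases le_or_gt u Δ with hu | hu
  · exact mul_le_mul_of_nonneg_right
      (Real.exp_le_exp.2 (mul_le_mul_of_nonneg_left hu hlam0.le)) (hh_nonneg r u)
  · have : h r u = 0 := hh_supp r u (fun hu' => absurd hu'.2 (by linarith [(hΔx r).2]))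
    simp [this]

include hlam0 hΔx hh_meas hh_nonneg hh_int hh_supp in
lemma exp_h_intOn (r : ℝ) :
    IntegrableOn (fun u => Real.exp (lam0 * u) * h r u) (Set.Ioi (0:ℝ)) := by
  refine Integrable.mono ((h_intOn hh_int r).const_mul (Real.exp (lam0 * Δ)))
    ((Real.measurable_exp.comp (measurable_const.mul measurable_id)).mul
      hh_meas.of_uncurry_left).aestronglyMeasurable
    (Filter.Eventually.of_forall fun u => ?_)
  rw [Real.norm_eq_abs, Real.norm_eq_abs,
    abs_of_nonneg (mul_nonneg (Real.exp_pos _).le (hh_nonneg r u)),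
    abs_of_nonneg (mul_nonneg (Real.exp_pos _).le (hh_nonneg r u))]
  exact exp_h_le hlam0 hΔx hh_nonneg hh_supp r u

include hlam0 hΔx hh_meas hh_nonneg hh_int hh_supp in
lemma exp_h_integral_le (r : ℝ) :
    (∫ u in Set.Ioi (0:ℝ), Real.exp (lam0 * u) * h r u) ≤ Real.exp (lam0 * Δ) := by
  calc (∫ u in Set.Ioi (0:ℝ), Real.exp (lam0 * u) * h r u)
      ≤ ∫ u in Set.Ioi (0:ℝ), Real.exp (lam0 * Δ) * h r u :=
        integral_mono (exp_h_intOn hlam0 hΔx hh_meas hh_nonneg hh_int hh_supp r)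
          ((h_intOn hh_int r).const_mul _)
          (fun u => exp_h_le hlam0 hΔx hh_nonneg hh_supp r u)
    _ = Real.exp (lam0 * Δ) := by rw [integral_const_mul, hh_int r, mul_one]

include hh_nonneg in
lemma exp_h_integral_nonneg (r : ℝ) :
    0 ≤ ∫ u in Set.Ioi (0:ℝ), Real.exp (lam0 * u) * h r u :=
  setIntegral_nonneg measurableSet_Ioi fun u _ =>
    mul_nonneg (Real.exp_pos _).le (hh_nonneg r u)

include hlam0 hΔx hh_meas hh_nonneg hh_int hh_supp in
lemma coord (r : ℝ) :
    (∫ u, vfun lam0 Bmax Δ δ L (r + u) * h r u) ≤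
      vfun lam0 Bmax Δ δ L r *
        (if Bmax * (L:ℝ) - 2*Δ - δ < r then
            ∫ u in Set.Ioi (0:ℝ), Real.exp (lam0 * u) * h r u
          else 1) := by
  have hmem_of_ne : ∀ u, h r u ≠ 0 → u ∈ Set.Icc (0:ℝ) (Δx r) := by
    intro u hu; by_contra hc; exact hu (hh_supp r u hc)
  have hg_meas : Measurable fun u => vfun lam0 Bmax Δ δ L (r + u) * h r u :=
    ((vfun_meas lam0 Bmax Δ δ L).comp (measurable_const.add measurable_id)).mul
      hh_meas.of_uncurry_left
  have gbound : ∀ u, vfun lam0 Bmax Δ δ L (r + u) * h r u ≤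
      (vfun lam0 Bmax Δ δ L r * Real.exp (lam0 * Δ)) * h r u := by
    intro u
    by_cases hz : h r u = 0
    · simp [hz]
    obtain ⟨hu0, huΔ⟩ := hmem_of_ne u hz
    have huΔ' : u ≤ Δ := huΔ.trans (hΔx r).2
    calc vfun lam0 Bmax Δ δ L (r + u) * h r u
        ≤ (vfun lam0 Bmax Δ δ L r * Real.exp (lam0 * u)) * h r u :=
          mul_le_mul_of_nonneg_right (vfun_add_le lam0 Bmax Δ δ L hlam0.le r u hu0)
            (hh_nonneg r u)
      _ ≤ (vfun lam0 Bmax Δ δ L r * Real.exp (lam0 * Δ)) * h r u :=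
          mul_le_mul_of_nonneg_right
            (mul_le_mul_of_nonneg_left
              (Real.exp_le_exp.2 (mul_le_mul_of_nonneg_left huΔ' hlam0.le))
              (vfun_pos lam0 Bmax Δ δ L r).le)
            (hh_nonneg r u)
  have hvanish : ∀ u ∉ Set.Ici (0:ℝ), vfun lam0 Bmax Δ δ L (r + u) * h r u = 0 := by
    intro u hu
    have : h r u = 0 := hh_supp r u (fun hc => hu hc.1)
    simp [this]
  have step1 : (∫ u, vfun lam0 Bmax Δ δ L (r + u) * h r u) =
      ∫ u in Set.Ioi (0:ℝ), vfun lam0 Bmax Δ δ L (r + u) * h r u := by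
    rw [← setIntegral_eq_integral_of_forall_compl_eq_zero hvanish,
      integral_Ici_eq_integral_Ioi]
  have g_intOn : IntegrableOn (fun u => vfun lam0 Bmax Δ δ L (r + u) * h r u)
      (Set.Ioi (0:ℝ)) := by
    refine Integrable.mono
      ((h_intOn hh_int r).const_mul (vfun lam0 Bmax Δ δ L r * Real.exp (lam0 * Δ)))
      hg_meas.aestronglyMeasurable (Filter.Eventually.of_forall fun u => ?_)
    rw [Real.norm_eq_abs, Real.norm_eq_abs,
      abs_of_nonneg (mul_nonneg (vfun_pos lam0 Bmax Δ δ L _).le (hh_nonneg r u)),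
      abs_of_nonneg (mul_nonneg
        (mul_nonneg (vfun_pos lam0 Bmax Δ δ L r).le (Real.exp_pos _).le) (hh_nonneg r u))]
    exact gbound u
  rw [step1]
  by_cases hE : Bmax * (L:ℝ) - 2*Δ - δ < r
  · rw [if_pos hE]
    calc (∫ u in Set.Ioi (0:ℝ), vfun lam0 Bmax Δ δ L (r + u) * h r u)
        ≤ ∫ u in Set.Ioi (0:ℝ), vfun lam0 Bmax Δ δ L r * (Real.exp (lam0 * u) * h r u) := by
          refine setIntegral_mono_on g_intOn
            ((exp_h_intOn hlam0 hΔx hh_meas hh_nonneg hh_int hh_supp r).const_mul _)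
            measurableSet_Ioi fun u hu => ?_
          rw [← mul_assoc]
          exact mul_le_mul_of_nonneg_right
            (vfun_add_le lam0 Bmax Δ δ L hlam0.le r u (le_of_lt hu)) (hh_nonneg r u)
      _ = vfun lam0 Bmax Δ δ L r * ∫ u in Set.Ioi (0:ℝ), Real.exp (lam0 * u) * h r u :=
          integral_const_mul _ _
  · rw [if_neg hE]
    push_neg at hE
    have heq : Set.EqOn (fun u => vfun lam0 Bmax Δ δ L (r + u) * h r u) (h r)
        (Set.Ioi (0:ℝ)) := by
      intro u _
      by_cases hz : h r u = 0
      · simp [hz]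
      obtain ⟨hu0, huΔ⟩ := hmem_of_ne u hz
      have : vfun lam0 Bmax Δ δ L (r + u) = 1 :=
        vfun_eq_one lam0 Bmax Δ δ L _ (by linarith [(hΔx r).2])
      simp [this]
    rw [setIntegral_congr_fun measurableSet_Ioi heq, hh_int r, mul_one]
    exact one_le_vfun lam0 Bmax Δ δ L hlam0.le r

include hlam0 hΔx hh_meas hh_nonneg hh_int hh_supp in
lemma perJ {k : ℕ} (J : Finset (Fin (2*k))) (r : Fin (2*k) → ℝ) :
    (∫ β : {i // i ∈ J} → ℝ in Set.univ.pi fun _ => Set.Icc (0:ℝ) Δ,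
        Vfun lam0 Bmax Δ δ L (r + emb J β) * ∏ j : {i // i ∈ J}, h (r j.1) (β j)) ≤
      Vfun lam0 Bmax Δ δ L r *
        ∏ i ∈ J ∩ EL Bmax Δ δ L r,
          ∫ u in Set.Ioi (0:ℝ), Real.exp (lam0 * u) * h (r i) u := by
  classical
  set v := vfun lam0 Bmax Δ δ L with hv
  -- the integrand vanishes outside the box
  have hvan : ∀ β : {i // i ∈ J} → ℝ, β ∉ (Set.univ.pi fun _ => Set.Icc (0:ℝ) Δ) →
      Vfun lam0 Bmax Δ δ L (r + emb J β) * ∏ j : {i // i ∈ J}, h (r j.1) (β j) = 0 := by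
    intro β hβ
    rw [Set.mem_univ_pi] at hβ
    push_neg at hβ
    obtain ⟨j, hj⟩ := hβ
    have : h (r j.1) (β j) = 0 := by
      refine hh_supp _ _ fun hc => hj ⟨hc.1, hc.2.trans (hΔx (r j.1)).2⟩
    rw [Finset.prod_eq_zero (Finset.mem_univ j) this, mul_zero]
  rw [setIntegral_eq_integral_of_forall_compl_eq_zero hvan]
  -- factorize the integrand
  have key : ∀ β : {i // i ∈ J} → ℝ,
      Vfun lam0 Bmax Δ δ L (r + emb J β) * ∏ j : {i // i ∈ J}, h (r j.1) (β j) =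
        (∏ i ∈ Jᶜ, v (r i)) *
          ∏ j : {i // i ∈ J}, (v (r j.1 + β j) * h (r j.1) (β j)) := by
    intro β
    have h1 : ∏ i ∈ Jᶜ, v ((r + emb J β) i) = ∏ i ∈ Jᶜ, v (r i) :=
      Finset.prod_congr rfl fun i hi => by
        simp [emb, Finset.mem_compl.1 hi]
    have h2 : ∏ i ∈ J, v ((r + emb J β) i) = ∏ j : {i // i ∈ J}, v (r j.1 + β j) := by
      rw [← Finset.prod_coe_sort J (fun i => v ((r + emb J β) i))]
      exact Finset.prod_congr rfl fun j _ => by simp [emb, j.2]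
    rw [Vfun, ← Finset.prod_mul_prod_compl J (fun i => v ((r + emb J β) i)), h1, h2,
      Finset.prod_mul_distrib]
    ring
  simp_rw [key]
  rw [integral_const_mul]
  rw [volume_pi, integral_fintype_prod_eq_prod (ι := {i // i ∈ J})
    (fun j u => v (r j.1 + u) * h (r j.1) u)]
  -- bound each factor
  have hle : (∏ j : {i // i ∈ J}, ∫ u, v (r j.1 + u) * h (r j.1) u) ≤
      ∏ j : {i // i ∈ J}, (v (r j.1) *
        (if Bmax * (L:ℝ) - 2*Δ - δ < r j.1 then
            ∫ u in Set.Ioi (0:ℝ), Real.exp (lam0 * u) * h (r j.1) u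
          else 1)) := by
    refine Finset.prod_le_prod (fun j _ => integral_nonneg fun u =>
      mul_nonneg (vfun_pos lam0 Bmax Δ δ L _).le (hh_nonneg _ _)) (fun j _ => ?_)
    exact coord hlam0 hΔx hh_meas hh_nonneg hh_int hh_supp (r j.1)
  refine le_trans (mul_le_mul_of_nonneg_left hle
    (Finset.prod_nonneg fun i _ => (vfun_pos lam0 Bmax Δ δ L _).le)) (le_of_eq ?_)
  have h3 : (∏ j : {i // i ∈ J}, (v (r j.1) *
      (if Bmax * (L:ℝ) - 2*Δ - δ < r j.1 then
          ∫ u in Set.Ioi (0:ℝ), Real.exp (lam0 * u) * h (r j.1) u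
        else 1))) =
      (∏ i ∈ J, v (r i)) * ∏ i ∈ J, (if Bmax * (L:ℝ) - 2*Δ - δ < r i then
          ∫ u in Set.Ioi (0:ℝ), Real.exp (lam0 * u) * h (r i) u
        else 1) := by
    rw [Finset.prod_mul_distrib,
      Finset.prod_coe_sort J (fun i => v (r i)),
      Finset.prod_coe_sort J (fun i => if Bmax * (L:ℝ) - 2*Δ - δ < r i then
        ∫ u in Set.Ioi (0:ℝ), Real.exp (lam0 * u) * h (r i) u else 1)]
  have h4 : (∏ i ∈ J, (if Bmax * (L:ℝ) - 2*Δ - δ < r i then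
      ∫ u in Set.Ioi (0:ℝ), Real.exp (lam0 * u) * h (r i) u else 1)) =
      ∏ i ∈ J ∩ EL Bmax Δ δ L r,
        ∫ u in Set.Ioi (0:ℝ), Real.exp (lam0 * u) * h (r i) u := by
    rw [← Finset.prod_filter]
    congr 1
    ext i
    simp [EL, Finset.mem_filter, Finset.mem_inter]
  rw [h3, h4, Vfun, ← Finset.prod_mul_prod_compl J (fun i => v (r i))]
  ring

end hfacts

theorem statement2
    (k : ℕ) (hk : 0 < k)
    (δ Δ Bmax : ℝ) (hδ : 0 < δ) (hΔ : 0 < Δ) (hB : Δ + δ < Bmax)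
    (p : Finset (Fin (2*k)) × Finset (Fin (2*k)) → (Fin (2*k) → ℝ) → (Fin (2*k) → ℝ) → ℝ)
    (hp_meas : ∀ JM, Measurable fun rs : (Fin (2*k) → ℝ) × (Fin (2*k) → ℝ) => p JM rs.1 rs.2)
    (hp_mem : ∀ JM ∈ Jk k, ∀ r s : Fin (2*k) → ℝ, p JM r s ∈ Set.Icc (0:ℝ) 1)
    (hp_sum : ∀ r s : Fin (2*k) → ℝ, ∑ JM ∈ Jk k, p JM r s = 1)
    (Δx : ℝ → ℝ) (hΔx : ∀ x, Δx x ∈ Set.Ioc (0:ℝ) Δ)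
    (h : ℝ → ℝ → ℝ)
    (hh_meas : Measurable (Function.uncurry h))
    (hh_nonneg : ∀ x u, 0 ≤ h x u)
    (hh_int : ∀ x, ∫ u in Set.Ioi (0:ℝ), h x u = 1)
    (hh_supp : ∀ x u, u ∉ Set.Icc (0:ℝ) (Δx x) → h x u = 0)
    (lam0 : ℝ) (hlam0 : 0 < lam0) (L : ℕ) (hL : 0 < L)
    (x : Fin (2*k) → ℝ) (hx : ∀ i, 0 ≤ x i)
    (α₁ α₂ : Fin (2*k) → ℝ)
    (hα₁ : ∀ i, α₁ i ∈ Set.Icc (0:ℝ) δ) (hα₂ : ∀ i, α₂ i ∈ Set.Icc (0:ℝ) δ) :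
    (∑ JM ∈ Jk k,
        p JM (x - α₁) (x - α₂) *
          ∫ β : {i // i ∈ JM.1} → ℝ in Set.univ.pi fun _ => Set.Icc (0:ℝ) Δ,
            Vfun lam0 Bmax Δ δ L (x - α₁ + emb JM.1 β) *
              ∏ j : {i // i ∈ JM.1}, h ((x - α₁) j.1) (β j)) ≤
      Vfun lam0 Bmax Δ δ L (x - α₁) * Lambda k Bmax Δ δ p h lam0 L := by
  classical
  have hVnonneg : 0 ≤ Vfun lam0 Bmax Δ δ L (x - α₁) :=
    Finset.prod_nonneg fun i _ => (vfun_pos _ _ _ _ _ _).le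
  have step1 : (∑ JM ∈ Jk k,
      p JM (x - α₁) (x - α₂) *
        ∫ β : {i // i ∈ JM.1} → ℝ in Set.univ.pi fun _ => Set.Icc (0:ℝ) Δ,
          Vfun lam0 Bmax Δ δ L (x - α₁ + emb JM.1 β) *
            ∏ j : {i // i ∈ JM.1}, h ((x - α₁) j.1) (β j)) ≤
      Vfun lam0 Bmax Δ δ L (x - α₁) *
        ∑ JM ∈ Jk k, p JM (x - α₁) (x - α₂) *
          ∏ i ∈ JM.1 ∩ EL Bmax Δ δ L (x - α₁),
            ∫ u in Set.Ioi (0:ℝ), Real.exp (lam0 * u) * h ((x - α₁) i) u := by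
    rw [Finset.mul_sum]
    refine Finset.sum_le_sum fun JM hJM => ?_
    have hp0 := (hp_mem JM hJM (x - α₁) (x - α₂)).1
    calc p JM (x - α₁) (x - α₂) *
          ∫ β : {i // i ∈ JM.1} → ℝ in Set.univ.pi fun _ => Set.Icc (0:ℝ) Δ,
            Vfun lam0 Bmax Δ δ L (x - α₁ + emb JM.1 β) *
              ∏ j : {i // i ∈ JM.1}, h ((x - α₁) j.1) (β j)
        ≤ p JM (x - α₁) (x - α₂) *
            (Vfun lam0 Bmax Δ δ L (x - α₁) *
              ∏ i ∈ JM.1 ∩ EL Bmax Δ δ L (x - α₁),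
                ∫ u in Set.Ioi (0:ℝ), Real.exp (lam0 * u) * h ((x - α₁) i) u) :=
          mul_le_mul_of_nonneg_left
            (perJ hlam0 hΔx hh_meas hh_nonneg hh_int hh_supp JM.1 (x - α₁)) hp0
      _ = Vfun lam0 Bmax Δ δ L (x - α₁) *
            (p JM (x - α₁) (x - α₂) *
              ∏ i ∈ JM.1 ∩ EL Bmax Δ δ L (x - α₁),
                ∫ u in Set.Ioi (0:ℝ), Real.exp (lam0 * u) * h ((x - α₁) i) u) := by ring
  refine step1.trans (mul_le_mul_of_nonneg_left ?_ hVnonneg)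
  have hbdd : BddAbove (Set.range fun rs : (Fin (2*k) → ℝ) × (Fin (2*k) → ℝ) =>
      ∑ JM ∈ Jk k, p JM rs.1 rs.2 *
        ∏ i ∈ JM.1 ∩ EL Bmax Δ δ L rs.1,
          ∫ u in Set.Ioi (0:ℝ), Real.exp (lam0 * u) * h (rs.1 i) u) := by
    refine ⟨(Jk k).card * Real.exp (lam0 * Δ) ^ (2*k), ?_⟩
    rintro y ⟨rs, rfl⟩
    have hterm : ∀ JM ∈ Jk k, p JM rs.1 rs.2 *
        (∏ i ∈ JM.1 ∩ EL Bmax Δ δ L rs.1,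
          ∫ u in Set.Ioi (0:ℝ), Real.exp (lam0 * u) * h (rs.1 i) u) ≤
        Real.exp (lam0 * Δ) ^ (2*k) := by
      intro JM hJM
      have hP0 : 0 ≤ ∏ i ∈ JM.1 ∩ EL Bmax Δ δ L rs.1,
          ∫ u in Set.Ioi (0:ℝ), Real.exp (lam0 * u) * h (rs.1 i) u :=
        Finset.prod_nonneg fun i _ => exp_h_integral_nonneg hh_nonneg _
      have hPle : (∏ i ∈ JM.1 ∩ EL Bmax Δ δ L rs.1,
          ∫ u in Set.Ioi (0:ℝ), Real.exp (lam0 * u) * h (rs.1 i) u) ≤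
          Real.exp (lam0 * Δ) ^ (2*k) := by
        calc (∏ i ∈ JM.1 ∩ EL Bmax Δ δ L rs.1,
            ∫ u in Set.Ioi (0:ℝ), Real.exp (lam0 * u) * h (rs.1 i) u)
            ≤ ∏ _i ∈ JM.1 ∩ EL Bmax Δ δ L rs.1, Real.exp (lam0 * Δ) :=
              Finset.prod_le_prod (fun i _ => exp_h_integral_nonneg hh_nonneg _)
                (fun i _ => exp_h_integral_le hlam0 hΔx hh_meas hh_nonneg hh_int hh_supp _)
          _ = Real.exp (lam0 * Δ) ^ (JM.1 ∩ EL Bmax Δ δ L rs.1).card :=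
              Finset.prod_const _
          _ ≤ Real.exp (lam0 * Δ) ^ (2*k) := by
              refine pow_le_pow_right₀ (Real.one_le_exp (by positivity)) ?_
              calc (JM.1 ∩ EL Bmax Δ δ L rs.1).card ≤ (Finset.univ : Finset (Fin (2*k))).card :=
                    Finset.card_le_univ _
                _ = 2*k := by simp
      calc p JM rs.1 rs.2 * (∏ i ∈ JM.1 ∩ EL Bmax Δ δ L rs.1,
            ∫ u in Set.Ioi (0:ℝ), Real.exp (lam0 * u) * h (rs.1 i) u)
          ≤ 1 * (Real.exp (lam0 * Δ) ^ (2*k)) :=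
            mul_le_mul (hp_mem JM hJM rs.1 rs.2).2 hPle hP0 zero_le_one
        _ = Real.exp (lam0 * Δ) ^ (2*k) := one_mul _
    calc (∑ JM ∈ Jk k, p JM rs.1 rs.2 *
        ∏ i ∈ JM.1 ∩ EL Bmax Δ δ L rs.1,
          ∫ u in Set.Ioi (0:ℝ), Real.exp (lam0 * u) * h (rs.1 i) u)
        ≤ ∑ _JM ∈ Jk k, Real.exp (lam0 * Δ) ^ (2*k) := Finset.sum_le_sum hterm
      _ = (Jk k).card * Real.exp (lam0 * Δ) ^ (2*k) := by
          rw [Finset.sum_const, nsmul_eq_mul]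
  rw [Lambda]
  exact le_ciSup hbdd ((x - α₁), (x - α₂))
end
end

section
/- For every x ∈ ℝ₊^{2k} and every I ∈ 𝓘_k: ∫_{[0,δ]^I} 𝒱(x − ι_I u) ∏_{i∈I} g(u_i) du ≤ ( 1{∀ i ∈ I : x_i ≤ B_max·L − Δ} + 𝓛(g)(λ₀) · 1{∃ i ∈ I : x_i > B_max·L − Δ} ) · 𝒱(x). (Step 2 inequality in the proof of Proposition 5.1.) -/
open MeasureTheory Finset

noncomputable section

/-- A function vanishing on negatives agrees a.e. with its restriction to `Ioi 0`. -/
lemma aux_ae_indicator (f : ℝ → ℝ) (hf : ∀ u < (0:ℝ), f u = 0) :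
    f =ᵐ[volume] (Set.Ioi (0:ℝ)).indicator f := by
  have h : {x : ℝ | ¬ f x = (Set.Ioi (0:ℝ)).indicator f x} ⊆ {0} := by
    intro y hy
    simp only [Set.mem_setOf_eq] at hy
    by_contra h0
    rcases lt_trichotomy y 0 with h1 | h1 | h1
    · exact hy (by rw [hf y h1, Set.indicator_of_notMem (by simp; linarith)]
                )
    · exact h0 h1
    · exact hy (Set.indicator_of_mem h1 f).symm
  exact ae_iff.mpr (measure_mono_null h (measure_singleton 0))

theorem statement3
    (k : ℕ) (hk : 0 < k)
    (δ Δ Bmax : ℝ) (hδ : 0 < δ) (hΔ : 0 < Δ) (hB : Δ + δ < Bmax)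
    (g : ℝ → ℝ) (hg_meas : Measurable g) (hg_nonneg : ∀ u, 0 ≤ g u)
    (hg_int : ∫ u in Set.Ioi (0:ℝ), g u = 1)
    (hg_supp : ∀ u, u ∉ Set.Icc (0:ℝ) δ → g u = 0)
    (lam0 : ℝ) (hlam0 : 0 < lam0) (L : ℕ) (hL : 0 < L)
    (x : Fin (2*k) → ℝ) (hx : ∀ i, 0 ≤ x i)
    (I : Finset (Fin (2*k))) (hI : I ∈ Ik k) :
    (∫ u : {i // i ∈ I} → ℝ in Set.univ.pi fun _ => Set.Icc (0:ℝ) δ,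
        Vfun lam0 Bmax Δ δ L (x - emb I u) * ∏ i : {i // i ∈ I}, g (u i)) ≤
      ((if ∀ i ∈ I, x i ≤ Bmax * (L:ℝ) - Δ then (1:ℝ) else 0) +
          (∫ u in Set.Ioi (0:ℝ), Real.exp (-lam0 * u) * g u) *
            (if ∃ i ∈ I, Bmax * (L:ℝ) - Δ < x i then (1:ℝ) else 0)) *
        Vfun lam0 Bmax Δ δ L x := by
  -- basic facts about v
  have vpos : ∀ y, 0 < vfun lam0 Bmax Δ δ L y := fun y => Real.exp_pos _
  have vmono : ∀ y t : ℝ, 0 ≤ t → vfun lam0 Bmax Δ δ L (y - t) ≤ vfun lam0 Bmax Δ δ L y := by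
    intro y t ht
    apply Real.exp_le_exp.mpr
    apply mul_le_mul_of_nonneg_left _ hlam0.le
    exact max_le_max (by linarith) le_rfl
  have vfactor : ∀ y t : ℝ, Bmax * (L:ℝ) - Δ < y → 0 ≤ t → t ≤ δ →
      vfun lam0 Bmax Δ δ L (y - t) = Real.exp (-lam0 * t) * vfun lam0 Bmax Δ δ L y := by
    intro y t hy ht0 htδ
    have h1 : y - t - Bmax * (L:ℝ) + Δ + δ > 0 := by linarith
    have h2 : y - Bmax * (L:ℝ) + Δ + δ > 0 := by linarith
    unfold vfun
    rw [max_eq_left h1.le, max_eq_left h2.le, ← Real.exp_add]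
    ring_nf
  -- basic facts about g
  have hg0 : ∀ u < (0:ℝ), g u = 0 := by
    intro u hu; exact hg_supp u (by simp [Set.mem_Icc]; intro h; linarith)
  have hgInt : IntegrableOn g (Set.Ioi (0:ℝ)) := by
    by_contra h
    rw [integral_undef h] at hg_int; norm_num at hg_int
  have hg_ae := aux_ae_indicator g hg0
  have hgInteg : Integrable g :=
    (((integrable_indicator_iff measurableSet_Ioi).mpr hgInt).congr hg_ae.symm)
  have hgTotal : ∫ u, g u = 1 := by
    rw [integral_congr_ae hg_ae, integral_indicator measurableSet_Ioi]; exact hg_int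
  -- the exponentially tilted density
  set h : ℝ → ℝ := fun t => Real.exp (-lam0 * t) * g t with hh
  have h0 : ∀ u < (0:ℝ), h u = 0 := by intro u hu; simp [hh, hg0 u hu]
  have hInteg : Integrable h := by
    refine hgInteg.mono' ?_ ?_
    · apply Measurable.aestronglyMeasurable
      fun_prop
    filter_upwards with t
    show ‖h t‖ ≤ g t
    rcases lt_or_ge t 0 with ht | ht
    · rw [h0 t ht]; simpa using hg_nonneg t
    · have h1 : Real.exp (-lam0 * t) ≤ 1 := by
        apply Real.exp_le_one_iff.mpr
        have : 0 ≤ lam0 * t := mul_nonneg hlam0.le ht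
        linarith
      have h2 : 0 ≤ h t := mul_nonneg (Real.exp_pos _).le (hg_nonneg t)
      rw [Real.norm_eq_abs, abs_of_nonneg h2]
      calc h t = Real.exp (-lam0 * t) * g t := rfl
        _ ≤ 1 * g t := mul_le_mul_of_nonneg_right h1 (hg_nonneg t)
        _ = g t := one_mul _
  have hTotal : ∫ t, h t = ∫ u in Set.Ioi (0:ℝ), Real.exp (-lam0 * u) * g u := by
    rw [integral_congr_ae (aux_ae_indicator h h0), integral_indicator measurableSet_Ioi]
  set c : ℝ := ∫ u in Set.Ioi (0:ℝ), Real.exp (-lam0 * u) * g u with hc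
  have hcnn : 0 ≤ c := by
    apply setIntegral_nonneg measurableSet_Ioi
    intro t _; exact mul_nonneg (Real.exp_pos _).le (hg_nonneg t)
  -- the integrand
  set F : ({i // i ∈ I} → ℝ) → ℝ :=
    fun u => Vfun lam0 Bmax Δ δ L (x - emb I u) * ∏ i : {i // i ∈ I}, g (u i) with hF
  have Vpos : ∀ y : Fin (2*k) → ℝ, 0 < Vfun lam0 Bmax Δ δ L y :=
    fun y => Finset.prod_pos (fun i _ => vpos _)
  have Fnonneg : ∀ u, 0 ≤ F u := fun u =>
    mul_nonneg (Vpos _).le (Finset.prod_nonneg fun i _ => hg_nonneg _)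
  -- the set integral equals the full integral
  have hstep : (∫ u : {i // i ∈ I} → ℝ in Set.univ.pi fun _ => Set.Icc (0:ℝ) δ, F u)
      = ∫ u, F u := by
    apply setIntegral_eq_integral_of_forall_compl_eq_zero
    intro u hu
    have : ∃ j : {i // i ∈ I}, u j ∉ Set.Icc (0:ℝ) δ := by
      by_contra hcon
      push_neg at hcon
      exact hu (fun j _ => hcon j)
    obtain ⟨j, hj⟩ := this
    have : ∏ i : {i // i ∈ I}, g (u i) = 0 :=
      Finset.prod_eq_zero (Finset.mem_univ j) (hg_supp _ hj)
    rw [hF]; simp only [this, mul_zero]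
  rw [hstep]
  by_cases hcase : ∀ i ∈ I, x i ≤ Bmax * (L:ℝ) - Δ
  · -- all coordinates small
    have hnex : ¬ ∃ i ∈ I, Bmax * (L:ℝ) - Δ < x i := by
      push_neg; intro i hi; exact hcase i hi
    rw [if_pos hcase, if_neg hnex]
    have hb : ∀ u, F u ≤ Vfun lam0 Bmax Δ δ L x * ∏ i : {i // i ∈ I}, g (u i) := by
      intro u
      by_cases hu : ∀ j : {i // i ∈ I}, u j ∈ Set.Icc (0:ℝ) δ
      · apply mul_le_mul_of_nonneg_right _ (Finset.prod_nonneg fun i _ => hg_nonneg _)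
        apply Finset.prod_le_prod (fun i _ => (vpos _).le)
        intro i _
        show vfun lam0 Bmax Δ δ L (x i - emb I u i) ≤ vfun lam0 Bmax Δ δ L (x i)
        unfold emb
        by_cases hiI : i ∈ I
        · rw [dif_pos hiI]; exact vmono _ _ (hu ⟨i, hiI⟩).1
        · rw [dif_neg hiI, sub_zero]
      · push_neg at hu
        obtain ⟨j, hj⟩ := hu
        have hz : ∏ i : {i // i ∈ I}, g (u i) = 0 :=
          Finset.prod_eq_zero (Finset.mem_univ j) (hg_supp _ hj)
        rw [hF]; simp only [hz, mul_zero]; exact le_refl 0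
    have hGint : Integrable (fun u : {i // i ∈ I} → ℝ =>
        Vfun lam0 Bmax Δ δ L x * ∏ i : {i // i ∈ I}, g (u i)) :=
      (Integrable.fintype_prod (f := fun _ : {i // i ∈ I} => g) fun _ => hgInteg).const_mul _
    calc (∫ u, F u) ≤ ∫ u : {i // i ∈ I} → ℝ,
          Vfun lam0 Bmax Δ δ L x * ∏ i : {i // i ∈ I}, g (u i) :=
        integral_mono_of_nonneg (Filter.Eventually.of_forall Fnonneg) hGint
          (Filter.Eventually.of_forall hb)
      _ = Vfun lam0 Bmax Δ δ L x *
          ∫ u : {i // i ∈ I} → ℝ, ∏ i : {i // i ∈ I}, g (u i) := integral_const_mul _ _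
      _ = Vfun lam0 Bmax Δ δ L x * ∏ _i : {i // i ∈ I}, ∫ t : ℝ, g t := by
          rw [integral_fintype_prod_volume_eq_prod (f := fun _ : {i // i ∈ I} => g)]
      _ = Vfun lam0 Bmax Δ δ L x := by
          rw [hgTotal]; simp
      _ = (1 + c * 0) * Vfun lam0 Bmax Δ δ L x := by ring
  · -- some coordinate is large
    push_neg at hcase
    obtain ⟨i0, hi0I, hi0⟩ := hcase
    rw [if_neg (by push_neg; exact ⟨i0, hi0I, hi0⟩), if_pos ⟨i0, hi0I, hi0⟩]
    set j0 : {i // i ∈ I} := ⟨i0, hi0I⟩ with hj0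
    set ψ : {i // i ∈ I} → ℝ → ℝ :=
      fun j t => (if j = j0 then Real.exp (-lam0 * t) else 1) * g t with hψ
    have hψInt : ∀ j, Integrable (ψ j) := by
      intro j
      by_cases hj : j = j0
      · simp only [hψ, hj, if_pos rfl]; exact hInteg
      · simp only [hψ, if_neg hj, one_mul]; exact hgInteg
    have hψval : ∀ j, (∫ t, ψ j t) = if j = j0 then c else 1 := by
      intro j
      by_cases hj : j = j0
      · simp only [hψ, hj, if_pos rfl]; exact hTotal
      · simp only [hψ, if_neg hj, one_mul]; exact hgTotal
    have hb : ∀ u, F u ≤ Vfun lam0 Bmax Δ δ L x * ∏ j : {i // i ∈ I}, ψ j (u j) := by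
      intro u
      by_cases hu : ∀ j : {i // i ∈ I}, u j ∈ Set.Icc (0:ℝ) δ
      · have hsplit : ∏ j : {i // i ∈ I}, ψ j (u j)
            = Real.exp (-lam0 * u j0) * ∏ j : {i // i ∈ I}, g (u j) := by
          rw [hψ]
          rw [Finset.prod_mul_distrib]
          congr 1
          rw [Finset.prod_ite_eq' Finset.univ j0 (fun j => Real.exp (-lam0 * u j))]
          simp
        rw [hsplit, ← mul_assoc, mul_comm (Vfun lam0 Bmax Δ δ L x) (Real.exp (-lam0 * u j0))]
        apply mul_le_mul_of_nonneg_right _ (Finset.prod_nonneg fun i _ => hg_nonneg _)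
        -- Vfun (x - emb I u) ≤ exp(-lam0 * u j0) * Vfun x
        have hbd : Vfun lam0 Bmax Δ δ L (x - emb I u) ≤
            ∏ i, ((if i = i0 then Real.exp (-lam0 * u j0) else 1) * vfun lam0 Bmax Δ δ L (x i)) := by
          apply Finset.prod_le_prod (fun i _ => (vpos _).le)
          intro i _
          show vfun lam0 Bmax Δ δ L (x i - emb I u i) ≤ _
          by_cases hii : i = i0
          · subst hii
            rw [if_pos rfl]
            unfold emb
            rw [dif_pos hi0I]
            exact le_of_eq (vfactor _ _ hi0 (hu j0).1 (hu j0).2)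
          · rw [if_neg hii, one_mul]
            unfold emb
            by_cases hiI : i ∈ I
            · rw [dif_pos hiI]; exact vmono _ _ (hu ⟨i, hiI⟩).1
            · rw [dif_neg hiI, sub_zero]
        calc Vfun lam0 Bmax Δ δ L (x - emb I u) ≤ _ := hbd
          _ = Real.exp (-lam0 * u j0) * Vfun lam0 Bmax Δ δ L x := by
            rw [Finset.prod_mul_distrib, Finset.prod_ite_eq' Finset.univ i0
              (fun _ => Real.exp (-lam0 * u j0))]
            simp [Vfun]
      · push_neg at hu
        obtain ⟨j, hj⟩ := hu
        have hz1 : ∏ i : {i // i ∈ I}, g (u i) = 0 :=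
          Finset.prod_eq_zero (Finset.mem_univ j) (hg_supp _ hj)
        have hz2 : ∏ j' : {i // i ∈ I}, ψ j' (u j') = 0 :=
          Finset.prod_eq_zero (Finset.mem_univ j) (by simp [hψ, hg_supp _ hj])
        rw [hF]; simp only [hz1, hz2, mul_zero]; exact le_refl 0
    have hGint : Integrable (fun u : {i // i ∈ I} → ℝ =>
        Vfun lam0 Bmax Δ δ L x * ∏ j : {i // i ∈ I}, ψ j (u j)) :=
      (Integrable.fintype_prod_dep (f := ψ) hψInt).const_mul _
    calc (∫ u, F u) ≤ ∫ u : {i // i ∈ I} → ℝ,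
          Vfun lam0 Bmax Δ δ L x * ∏ j : {i // i ∈ I}, ψ j (u j) :=
        integral_mono_of_nonneg (Filter.Eventually.of_forall Fnonneg) hGint
          (Filter.Eventually.of_forall hb)
      _ = Vfun lam0 Bmax Δ δ L x *
          ∫ u : {i // i ∈ I} → ℝ, ∏ j : {i // i ∈ I}, ψ j (u j) := integral_const_mul _ _
      _ = Vfun lam0 Bmax Δ δ L x * ∏ j : {i // i ∈ I}, ∫ t : ℝ, ψ j t := by
          rw [integral_fintype_prod_volume_eq_prod (f := ψ)]
      _ = Vfun lam0 Bmax Δ δ L x * c := by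
          congr 1
          simp_rw [hψval]
          rw [Finset.prod_ite_eq' Finset.univ j0 (fun _ => c)]
          simp
      _ = (0 + c * 1) * Vfun lam0 Bmax Δ δ L x := by ring
end
end

section
/- Assume additionally that lim_{x → +∞} Δ_x = 0. Then for every λ > 0 and every ε > 0 there exists L ∈ ℕ* such that Λ(λ, L) ≤ 1 + ε. (Proposition: control of the Laplace transforms.) -/
open MeasureTheory Finset

noncomputable section

theorem statement5
    (k : ℕ) (hk : 0 < k)
    (δ Δ Bmax : ℝ) (hδ : 0 < δ) (hΔ : 0 < Δ) (hB : Δ + δ < Bmax)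
    (p : Finset (Fin (2*k)) × Finset (Fin (2*k)) → (Fin (2*k) → ℝ) → (Fin (2*k) → ℝ) → ℝ)
    (hp_meas : ∀ JM, Measurable fun rs : (Fin (2*k) → ℝ) × (Fin (2*k) → ℝ) => p JM rs.1 rs.2)
    (hp_mem : ∀ JM ∈ Jk k, ∀ r s : Fin (2*k) → ℝ, p JM r s ∈ Set.Icc (0:ℝ) 1)
    (hp_sum : ∀ r s : Fin (2*k) → ℝ, ∑ JM ∈ Jk k, p JM r s = 1)
    (Δx : ℝ → ℝ) (hΔx : ∀ x, Δx x ∈ Set.Ioc (0:ℝ) Δ)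
    (h : ℝ → ℝ → ℝ)
    (hh_meas : Measurable (Function.uncurry h))
    (hh_nonneg : ∀ x u, 0 ≤ h x u)
    (hh_int : ∀ x, ∫ u in Set.Ioi (0:ℝ), h x u = 1)
    (hh_supp : ∀ x u, u ∉ Set.Icc (0:ℝ) (Δx x) → h x u = 0)
    (hΔx_lim : Filter.Tendsto Δx Filter.atTop (nhds 0)) :
    ∀ lam : ℝ, 0 < lam → ∀ ε : ℝ, 0 < ε →
      ∃ L : ℕ, 0 < L ∧ Lambda k Bmax Δ δ p h lam L ≤ 1 + ε := by
  intro lam hlam ε hε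
  have hBpos : 0 < Bmax := lt_trans (by linarith) hB
  set η : ℝ := Real.log (1+ε) / (2*k*lam) with hηdef
  have hlog : 0 < Real.log (1+ε) := Real.log_pos (by linarith)
  have h2k : (0:ℝ) < 2*k := by positivity
  have hηpos : 0 < η := by positivity
  -- eventually Δx x ≤ η
  have hev : ∀ᶠ x in Filter.atTop, Δx x < η := hΔx_lim.eventually_lt_const hηpos
  obtain ⟨X, hX⟩ := Filter.eventually_atTop.1 hev
  -- choose L
  obtain ⟨n, hn⟩ := exists_nat_ge ((X + 2*Δ + δ)/Bmax)
  refine ⟨n+1, Nat.succ_pos n, ?_⟩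
  have hL : X ≤ Bmax * ((n:ℝ)+1) - 2*Δ - δ := by
    have h1 : X + 2*Δ + δ ≤ Bmax * n := by
      rw [div_le_iff₀ hBpos] at hn; linarith [hn]
    nlinarith
  -- key integral bound
  have hkey : ∀ x : ℝ, Δx x ≤ η →
      (∫ u in Set.Ioi (0:ℝ), Real.exp (lam * u) * h x u) ≤ Real.exp (lam * η) := by
    intro x hx
    have hint : Integrable (fun u => h x u) (volume.restrict (Set.Ioi (0:ℝ))) := by
      by_contra hni
      have := hh_int x
      rw [integral_undef hni] at this
      norm_num at this
    have hg : Integrable (fun u => Real.exp (lam * Δx x) * h x u)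
        (volume.restrict (Set.Ioi (0:ℝ))) := hint.const_mul _
    have hfg : ∀ u : ℝ, Real.exp (lam * u) * h x u ≤ Real.exp (lam * Δx x) * h x u := by
      intro u
      by_cases hu : u ∈ Set.Icc (0:ℝ) (Δx x)
      · exact mul_le_mul_of_nonneg_right
          (Real.exp_le_exp.2 (mul_le_mul_of_nonneg_left hu.2 hlam.le)) (hh_nonneg x u)
      · rw [hh_supp x u hu]; simp
    calc (∫ u in Set.Ioi (0:ℝ), Real.exp (lam * u) * h x u)
        ≤ ∫ u in Set.Ioi (0:ℝ), Real.exp (lam * Δx x) * h x u := by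
          refine integral_mono_of_nonneg ?_ hg ?_
          · exact Filter.Eventually.of_forall fun u => mul_nonneg (Real.exp_pos _).le (hh_nonneg _ _)
          · exact Filter.Eventually.of_forall hfg
      _ = Real.exp (lam * Δx x) := by
          rw [integral_const_mul, hh_int x, mul_one]
      _ ≤ Real.exp (lam * η) :=
          Real.exp_le_exp.2 (mul_le_mul_of_nonneg_left hx hlam.le)
  have hexp1 : (1:ℝ) ≤ Real.exp (lam * η) := Real.one_le_exp (by positivity)
  have hexp2k : (Real.exp (lam * η))^(2*k) = 1 + ε := by
    rw [← Real.exp_nat_mul]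
    have : (2*k : ℕ) * (lam * η) = Real.log (1+ε) := by
      rw [hηdef]
      field_simp
      push_cast
      ring
    rw [this, Real.exp_log (by linarith)]
  -- bound Lambda
  rw [Lambda]
  refine ciSup_le fun rs => ?_
  have hbound : ∀ JM ∈ Jk k,
      p JM rs.1 rs.2 * ∏ i ∈ JM.1 ∩ EL Bmax Δ δ (n+1) rs.1,
        (∫ u in Set.Ioi (0:ℝ), Real.exp (lam * u) * h (rs.1 i) u)
      ≤ p JM rs.1 rs.2 * (1+ε) := by
    intro JM hJM
    refine mul_le_mul_of_nonneg_left ?_ (hp_mem JM hJM rs.1 rs.2).1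
    calc (∏ i ∈ JM.1 ∩ EL Bmax Δ δ (n+1) rs.1,
        ∫ u in Set.Ioi (0:ℝ), Real.exp (lam * u) * h (rs.1 i) u)
        ≤ ∏ _i ∈ JM.1 ∩ EL Bmax Δ δ (n+1) rs.1, Real.exp (lam * η) := by
          refine Finset.prod_le_prod ?_ ?_
          · intro i _
            exact integral_nonneg fun u => mul_nonneg (Real.exp_pos _).le (hh_nonneg _ _)
          · intro i hi
            refine hkey (rs.1 i) ?_
            have hiE : i ∈ EL Bmax Δ δ (n+1) rs.1 := (Finset.mem_inter.1 hi).2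
            rw [EL, Finset.mem_filter] at hiE
            have : X ≤ rs.1 i := by
              have := hiE.2
              push_cast at this ⊢
              linarith [hL]
            exact (hX (rs.1 i) this).le
      _ = (Real.exp (lam * η))^(JM.1 ∩ EL Bmax Δ δ (n+1) rs.1).card := by
          rw [Finset.prod_const]
      _ ≤ (Real.exp (lam * η))^(2*k) := by
          refine pow_le_pow_right₀ hexp1 ?_
          calc (JM.1 ∩ EL Bmax Δ δ (n+1) rs.1).card ≤ Fintype.card (Fin (2*k)) :=
              Finset.card_le_univ _
            _ = 2*k := Fintype.card_fin _
      _ = 1 + ε := hexp2k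
  calc (∑ JM ∈ Jk k, p JM rs.1 rs.2 * ∏ i ∈ JM.1 ∩ EL Bmax Δ δ (n+1) rs.1,
        ∫ u in Set.Ioi (0:ℝ), Real.exp (lam * u) * h (rs.1 i) u)
      ≤ ∑ JM ∈ Jk k, p JM rs.1 rs.2 * (1+ε) := Finset.sum_le_sum hbound
    _ = 1 + ε := by rw [← Finset.sum_mul, hp_sum rs.1 rs.2, one_mul]
end
end

section
/- Let b : ℝ₊ → ℝ₊ be measurable and suppose there exist b̃ > 0 and d ∈ ℕ with b(a) ≤ b̃(1 + a^d) for all a ≥ 0, and there exist a₀ ≥ 0 and b₀ > 0 with b(a) ≥ b₀ for all a ≥ a₀. Define f(y) = ∫₀^∞ b(s) · exp(−∫₀^s b(u) du − y s) ds for y ≥ 0. Then f is continuous and nonincreasing on [0, ∞), f(0) = 1, and lim_{y → +∞} f(y) = 0; consequently, for every c ∈ (0, 1) there exists y > 0 such that f(y) = c. -/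
open MeasureTheory Set Filter Topology

lemma aux_neg_log_integrable : IntegrableOn (fun t => -Real.log t) (Set.Ioc (0:ℝ) 1) := by
  have hrpow : IntegrableOn (fun t : ℝ => 2 * t ^ (-(2:ℝ)⁻¹)) (Set.Ioc (0:ℝ) 1) := by
    have := (intervalIntegral.intervalIntegrable_rpow' (a := 0) (b := 1)
      (r := -(2:ℝ)⁻¹) (by norm_num)).const_mul 2
    rw [intervalIntegrable_iff_integrableOn_Ioc_of_le (by norm_num)] at this
    exact this
  refine hrpow.integrable.mono' ?_ ?_
  · exact (Real.measurable_log.neg).aestronglyMeasurable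
  · rw [ae_restrict_iff' measurableSet_Ioc]
    filter_upwards with t ht
    have h0 : 0 < t := ht.1
    have h1 : t ≤ 1 := ht.2
    have hlog : Real.log t ≤ 0 := Real.log_nonpos h0.le h1
    rw [Real.norm_eq_abs, abs_of_nonneg (by linarith)]
    have heq : -Real.log t = 2 * Real.log (t ^ (-(2:ℝ)⁻¹)) := by
      rw [Real.log_rpow h0]; ring
    rw [heq]
    have hle : Real.log (t ^ (-(2:ℝ)⁻¹)) ≤ t ^ (-(2:ℝ)⁻¹) := by
      have h := Real.log_le_sub_one_of_pos (x := t ^ (-(2:ℝ)⁻¹)) (Real.rpow_pos_of_pos h0 _)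
      linarith
    nlinarith [Real.rpow_pos_of_pos h0 (-(2:ℝ)⁻¹)]

lemma aux_neg_log_integral : ∫ t in Set.Ioc (0:ℝ) 1, -Real.log t = 1 := by
  have hu : Tendsto (fun n : ℕ => (1:ℝ)/(n+1)) atTop (𝓝[>] 0) := by
    apply tendsto_nhdsWithin_of_tendsto_nhds_of_eventually_within
    · exact tendsto_one_div_add_atTop_nhds_zero_nat
    · filter_upwards with n
      exact Set.mem_Ioi.mpr (by positivity)
  have hmono : Monotone (fun n : ℕ => Set.Ioc ((1:ℝ)/(n+1)) 1) := by
    intro m n hmn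
    apply Set.Ioc_subset_Ioc_left
    apply one_div_le_one_div_of_le (by positivity)
    have : (m:ℝ) ≤ n := Nat.cast_le.mpr hmn
    linarith
  have hunion : (⋃ n : ℕ, Set.Ioc ((1:ℝ)/(n+1)) 1) = Set.Ioc (0:ℝ) 1 := by
    ext s
    simp only [Set.mem_iUnion, Set.mem_Ioc]
    constructor
    · rintro ⟨n, h1, h2⟩
      exact ⟨lt_trans (by positivity) h1, h2⟩
    · rintro ⟨h1, h2⟩
      obtain ⟨n, hn⟩ := exists_nat_one_div_lt h1
      exact ⟨n, hn, h2⟩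
  have hfi : IntegrableOn (fun t => -Real.log t) (⋃ n : ℕ, Set.Ioc ((1:ℝ)/(n+1)) 1) := by
    rw [hunion]; exact aux_neg_log_integrable
  have htend := tendsto_setIntegral_of_monotone (fun n => measurableSet_Ioc) hmono hfi
  rw [hunion] at htend
  have hval : ∀ n : ℕ, ∫ t in Set.Ioc ((1:ℝ)/(n+1)) 1, -Real.log t
      = 1 - (1:ℝ)/(n+1) + ((1:ℝ)/(n+1)) * Real.log ((1:ℝ)/(n+1)) := by
    intro n
    have hpos : (0:ℝ) < 1/(n+1) := by positivity
    have hle : (1:ℝ)/(n+1) ≤ 1 := by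
      rw [div_le_one (by positivity)]; linarith [Nat.cast_nonneg (α := ℝ) n]
    rw [← intervalIntegral.integral_of_le hle]
    rw [intervalIntegral.integral_neg]
    rw [integral_log]
    simp
    ring
  have hlim : Tendsto (fun n : ℕ => 1 - (1:ℝ)/(n+1) + ((1:ℝ)/(n+1)) * Real.log ((1:ℝ)/(n+1)))
      atTop (𝓝 1) := by
    have h1 : Tendsto (fun n : ℕ => (1:ℝ)/(n+1)) atTop (𝓝 0) :=
      tendsto_one_div_add_atTop_nhds_zero_nat
    have h2 : Tendsto (fun n : ℕ => ((1:ℝ)/(n+1)) * Real.log ((1:ℝ)/(n+1))) atTop (𝓝 0) := by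
      have h := (tendsto_log_mul_rpow_nhdsGT_zero (r := 1) one_pos).comp hu
      refine h.congr (fun n => ?_)
      simp only [Function.comp_apply, Real.rpow_one]
      ring
    have := ((tendsto_const_nhds (x := (1:ℝ)).sub h1).add h2)
    simpa using this
  have := htend.congr hval
  exact tendsto_nhds_unique this hlim

theorem statement14 (b : ℝ → ℝ) (hb_meas : Measurable b)
    (hb_nonneg : ∀ a, 0 ≤ a → 0 ≤ b a)
    (btil : ℝ) (d : ℕ) (hbtil : 0 < btil)
    (hub : ∀ a, 0 ≤ a → b a ≤ btil * (1 + a ^ d))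
    (a₀ b₀ : ℝ) (ha₀ : 0 ≤ a₀) (hb₀ : 0 < b₀)
    (hlb : ∀ a, a₀ ≤ a → b₀ ≤ b a)
    (f : ℝ → ℝ)
    (hf : ∀ y : ℝ,
      f y = ∫ s in Set.Ioi (0:ℝ), b s * Real.exp (-(∫ u in (0:ℝ)..s, b u) - y * s)) :
    ContinuousOn f (Set.Ici 0) ∧ AntitoneOn f (Set.Ici 0) ∧ f 0 = 1 ∧
      Filter.Tendsto f Filter.atTop (nhds 0) ∧
      ∀ c : ℝ, c ∈ Set.Ioo (0:ℝ) 1 → ∃ y : ℝ, 0 < y ∧ f y = c := by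
  -- modified birth rate, vanishing on negatives
  set b' : ℝ → ℝ := fun a => if 0 ≤ a then b a else 0 with hb'def
  have hb'_meas : Measurable b' := Measurable.ite measurableSet_Ici hb_meas measurable_const
  have hb'_eq : ∀ a, 0 ≤ a → b' a = b a := fun a ha => if_pos ha
  have hb'_nonneg : ∀ a, 0 ≤ b' a := by
    intro a
    by_cases h : 0 ≤ a
    · rw [hb'_eq a h]; exact hb_nonneg a h
    · simp [hb'def, h]
  have hb'_ub : ∀ a, b' a ≤ btil * (1 + |a| ^ d) := by
    intro a
    by_cases h : 0 ≤ a
    · rw [hb'_eq a h, abs_of_nonneg h]; exact hub a h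
    · simp only [hb'def, if_neg h]
      positivity
  -- interval integrability of b'
  have hint : ∀ u v : ℝ, IntervalIntegrable b' volume u v := by
    intro u v
    rw [intervalIntegrable_iff]
    apply Measure.integrableOn_of_bounded (M := btil * (1 + (max |u| |v|) ^ d))
    · exact (measure_mono Set.uIoc_subset_uIcc).trans_lt measure_Icc_lt_top |>.ne
    · exact hb'_meas.aestronglyMeasurable
    · rw [ae_restrict_iff' measurableSet_uIoc]
      filter_upwards with a ha
      rw [Real.norm_eq_abs, abs_of_nonneg (hb'_nonneg a)]
      refine (hb'_ub a).trans ?_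
      have hmin : -(max |u| |v|) ≤ u ⊓ v := by
        apply le_inf
        · linarith [neg_abs_le u, le_max_left |u| |v|]
        · linarith [neg_abs_le v, le_max_right |u| |v|]
      have hmax : u ⊔ v ≤ max |u| |v| :=
        sup_le ((le_abs_self u).trans (le_max_left _ _))
          ((le_abs_self v).trans (le_max_right _ _))
      have h1 : |a| ≤ max |u| |v| := abs_le.mpr ⟨le_trans hmin ha.1.le, ha.2.trans hmax⟩
      have h2 : |a| ^ d ≤ (max |u| |v|) ^ d := pow_le_pow_left₀ (abs_nonneg a) h1 d
      nlinarith
  -- the primitive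
  set B : ℝ → ℝ := fun s => ∫ u in (0:ℝ)..s, b' u with hBdef
  have hBcont : Continuous B := intervalIntegral.continuous_primitive hint 0
  have hB0 : B 0 = 0 := intervalIntegral.integral_same
  have hBadd : ∀ u v : ℝ, B v = B u + ∫ x in u..v, b' x := by
    intro u v
    rw [hBdef]
    exact (intervalIntegral.integral_add_adjacent_intervals (hint 0 u) (hint u v)).symm
  have hBmono : Monotone B := by
    intro u v huv
    rw [hBadd u v]
    have : 0 ≤ ∫ x in u..v, b' x :=
      intervalIntegral.integral_nonneg huv (fun x _ => hb'_nonneg x)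
    linarith
  have hBnonneg : ∀ s, 0 ≤ s → 0 ≤ B s := by
    intro s hs
    rw [← hB0]
    exact hBmono hs
  have hBlb : ∀ s, a₀ ≤ s → b₀ * (s - a₀) ≤ B s := by
    intro s hs
    have h1 : B s = B a₀ + ∫ x in a₀..s, b' x := hBadd a₀ s
    have h2 : ∫ x in a₀..s, (fun _ => b₀) x ≤ ∫ x in a₀..s, b' x := by
      apply intervalIntegral.integral_mono_on hs intervalIntegrable_const (hint a₀ s)
      intro x hx
      rw [hb'_eq x (ha₀.trans hx.1)]
      exact hlb x hx.1
    rw [intervalIntegral.integral_const, smul_eq_mul, mul_comm] at h2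
    have h3 : 0 ≤ B a₀ := hBnonneg a₀ ha₀
    linarith
  have hBlb' : ∀ s, 0 ≤ s → b₀ * s - b₀ * a₀ ≤ B s := by
    intro s hs
    rcases le_or_gt a₀ s with h | h
    · have := hBlb s h; linarith
    · have := hBnonneg s hs; nlinarith
  -- the clean integrand
  set G : ℝ → ℝ → ℝ := fun y s => b' s * Real.exp (-B s - y * s) with hGdef
  have hfeq : ∀ y, f y = ∫ s in Set.Ioi (0:ℝ), G y s := by
    intro y
    rw [hf y]
    apply setIntegral_congr_fun measurableSet_Ioi
    intro s hs
    have hs0 : (0:ℝ) ≤ s := (le_of_lt hs)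
    have h1 : (∫ u in (0:ℝ)..s, b u) = B s := by
      rw [hBdef]
      apply intervalIntegral.integral_congr
      intro x hx
      rw [Set.uIcc_of_le hs0] at hx
      exact (hb'_eq x hx.1).symm
    simp only [hGdef]
    rw [h1, hb'_eq s hs0]
  -- dominating function
  set M : ℝ → ℝ := fun s => (btil * (1 + s ^ d) * Real.exp (b₀ * a₀)) * Real.exp (-(b₀ * s))
    with hMdef
  have hMnonneg : ∀ s, 0 < s → 0 ≤ M s := by
    intro s hs
    have : (0:ℝ) ≤ 1 + s ^ d := by positivity
    positivity
  have hGnonneg : ∀ y s, 0 ≤ G y s := by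
    intro y s
    have := hb'_nonneg s
    positivity
  have hGleM : ∀ y, 0 ≤ y → ∀ s, 0 < s → G y s ≤ M s := by
    intro y hy s hs
    simp only [hGdef, hMdef]
    have h1 : b' s ≤ btil * (1 + s ^ d) := by
      have := hb'_ub s
      rwa [abs_of_nonneg hs.le] at this
    have h2 : Real.exp (-B s - y * s) ≤ Real.exp (b₀ * a₀) * Real.exp (-(b₀ * s)) := by
      rw [← Real.exp_add]
      apply Real.exp_le_exp.mpr
      have h3 := hBlb' s hs.le
      nlinarith
    have h4 : 0 ≤ Real.exp (-B s - y * s) := (Real.exp_pos _).le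
    have h5 : 0 ≤ btil * (1 + s ^ d) := le_trans (hb'_nonneg s) h1
    calc b' s * Real.exp (-B s - y * s) ≤ btil * (1 + s ^ d) * Real.exp (-B s - y * s) := by
          nlinarith
      _ ≤ btil * (1 + s ^ d) * (Real.exp (b₀ * a₀) * Real.exp (-(b₀ * s))) := by nlinarith
      _ = btil * (1 + s ^ d) * Real.exp (b₀ * a₀) * Real.exp (-(b₀ * s)) := by ring
  have hM_int : IntegrableOn M (Set.Ioi (0:ℝ)) := by
    have h1 : IntegrableOn (fun s : ℝ => Real.exp (-b₀ * s)) (Set.Ioi (0:ℝ)) :=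
      exp_neg_integrableOn_Ioi 0 hb₀
    have h2 : IntegrableOn (fun s : ℝ => s ^ (d:ℝ) * Real.exp (-b₀ * s ^ (1:ℝ)))
        (Set.Ioi (0:ℝ)) :=
      integrableOn_rpow_mul_exp_neg_mul_rpow
        (lt_of_lt_of_le (by norm_num) (Nat.cast_nonneg d)) one_pos hb₀
    have h2' : IntegrableOn (fun s : ℝ => s ^ d * Real.exp (-b₀ * s)) (Set.Ioi (0:ℝ)) := by
      apply h2.congr_fun ?_ measurableSet_Ioi
      intro s hs
      simp [Real.rpow_natCast]
    have h3 : IntegrableOn (fun s : ℝ => btil * Real.exp (b₀ * a₀) *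
        (Real.exp (-b₀ * s) + s ^ d * Real.exp (-b₀ * s))) (Set.Ioi (0:ℝ)) := by
      have := (h1.add h2').const_mul (btil * Real.exp (b₀ * a₀))
      exact this.congr (by filter_upwards with s using by simp [Pi.add_apply])
    apply h3.congr_fun ?_ measurableSet_Ioi
    intro s hs
    simp only [hMdef, Pi.add_apply]
    have harg : -b₀ * s = -(b₀ * s) := by ring
    rw [harg]
    ring
  have hGmeas : ∀ y : ℝ, AEStronglyMeasurable (G y) (volume.restrict (Set.Ioi (0:ℝ))) := by
    intro y
    apply Measurable.aestronglyMeasurable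
    exact hb'_meas.mul ((Real.continuous_exp.comp
      ((hBcont.neg).sub (continuous_const.mul continuous_id))).measurable)
  have hGint : ∀ y, 0 ≤ y → IntegrableOn (G y) (Set.Ioi (0:ℝ)) := by
    intro y hy
    apply hM_int.integrable.mono' (hGmeas y)
    rw [ae_restrict_iff' measurableSet_Ioi]
    filter_upwards with s hs
    rw [Real.norm_eq_abs, abs_of_nonneg (hGnonneg y s)]
    exact hGleM y hy s hs
  -- continuity
  have hcont : ContinuousOn f (Set.Ici (0:ℝ)) := by
    have : ContinuousOn (fun y => ∫ s in Set.Ioi (0:ℝ), G y s) (Set.Ici (0:ℝ)) := by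
      apply continuousOn_of_dominated (bound := M)
      · exact fun y _ => hGmeas y
      · intro y hy
        rw [ae_restrict_iff' measurableSet_Ioi]
        filter_upwards with s hs
        rw [Real.norm_eq_abs, abs_of_nonneg (hGnonneg y s)]
        exact hGleM y hy s hs
      · exact hM_int
      · filter_upwards with s
        apply Continuous.continuousOn
        exact continuous_const.mul (Real.continuous_exp.comp
          (continuous_const.sub (continuous_id.mul continuous_const)))
    exact this.congr (fun y _ => hfeq y)
  -- antitone
  have hanti : AntitoneOn f (Set.Ici (0:ℝ)) := by
    intro y₁ hy₁ y₂ hy₂ h12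
    rw [hfeq y₁, hfeq y₂]
    apply setIntegral_mono_on (hGint y₂ hy₂) (hGint y₁ hy₁) measurableSet_Ioi
    intro s hs
    simp only [hGdef]
    apply mul_le_mul_of_nonneg_left _ (hb'_nonneg s)
    apply Real.exp_le_exp.mpr
    have hs' : (0:ℝ) < s := hs
    nlinarith
  -- tendsto 0 at top
  have htend : Tendsto f atTop (𝓝 (0:ℝ)) := by
    have h0 : (0:ℝ) = ∫ s in Set.Ioi (0:ℝ), (0:ℝ) := by simp
    have : Tendsto (fun y => ∫ s in Set.Ioi (0:ℝ), G y s) atTop (𝓝 (∫ s in Set.Ioi (0:ℝ), (0:ℝ))) := by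
      apply tendsto_integral_filter_of_dominated_convergence (bound := M)
      · filter_upwards with y; exact hGmeas y
      · filter_upwards [eventually_ge_atTop (0:ℝ)] with y hy
        rw [ae_restrict_iff' measurableSet_Ioi]
        filter_upwards with s hs
        rw [Real.norm_eq_abs, abs_of_nonneg (hGnonneg y s)]
        exact hGleM y hy s hs
      · exact hM_int
      · rw [ae_restrict_iff' measurableSet_Ioi]
        filter_upwards with s hs
        simp only [hGdef]
        have h1 : Tendsto (fun y : ℝ => -B s - y * s) atTop atBot := by
          have h2 : Tendsto (fun y : ℝ => y * s) atTop atTop :=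
            Tendsto.atTop_mul_const (hs : (0:ℝ) < s) tendsto_id
          have h3 := tendsto_neg_atTop_atBot.comp h2
          have h4 := tendsto_atBot_add_const_left _ (-B s) h3
          refine h4.congr (fun y => ?_)
          simp [sub_eq_add_neg]
        have h5 := (Real.tendsto_exp_atBot.comp h1).const_mul (b' s)
        simpa using h5
    rw [← h0] at this
    exact this.congr' (by filter_upwards with y using (hfeq y).symm) |>.mono_left le_rfl
  -- f 0 = 1
  have hf0 : f 0 = 1 := by
    rw [hfeq 0]
    have hnn : 0 ≤ᵐ[volume.restrict (Set.Ioi (0:ℝ))] G 0 := ae_of_all _ (fun s => hGnonneg 0 s)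
    rw [integral_eq_lintegral_of_nonneg_ae hnn (hGmeas 0)]
    have hlin : ∫⁻ s in Set.Ioi (0:ℝ), ENNReal.ofReal (G 0 s) = 1 := by
      set ν : Measure ℝ :=
        (volume.restrict (Set.Ioi (0:ℝ))).withDensity (fun s => ENNReal.ofReal (b' s)) with hνdef
      have hBmeas : Measurable B := hBcont.measurable
      have hexpmeas : Measurable (fun s => ENNReal.ofReal (Real.exp (-B s))) :=
        ENNReal.measurable_ofReal.comp ((Real.continuous_exp.comp hBcont.neg).measurable)
      have hstep1 : ∫⁻ s in Set.Ioi (0:ℝ), ENNReal.ofReal (G 0 s)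
          = ∫⁻ s, ENNReal.ofReal (Real.exp (-B s)) ∂ν := by
        have hb'of : Measurable (fun s : ℝ => ENNReal.ofReal (b' s)) :=
          ENNReal.measurable_ofReal.comp hb'_meas
        rw [hνdef, lintegral_withDensity_eq_lintegral_mul _ hb'of hexpmeas]
        apply lintegral_congr
        intro s
        simp only [hGdef, Pi.mul_apply, zero_mul, sub_zero]
        rw [ENNReal.ofReal_mul (hb'_nonneg s)]
      have hstep2 : ∫⁻ s, ENNReal.ofReal (Real.exp (-B s)) ∂ν
          = ∫⁻ t in Set.Ioi (0:ℝ), ν {s | t < Real.exp (-B s)} :=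
        lintegral_eq_lintegral_meas_lt ν (ae_of_all _ (fun s => (Real.exp_pos _).le))
          ((Real.continuous_exp.comp hBcont.neg).measurable.aemeasurable)
      have hkey : ∀ t : ℝ, 0 < t →
          ν {s | t < Real.exp (-B s)} = ENNReal.ofReal (-Real.log t) := by
        intro t ht
        set c : ℝ := -Real.log t with hcdef
        have hset : {s | t < Real.exp (-B s)} = {s | B s < c} := by
          ext s
          simp only [Set.mem_setOf_eq]
          rw [← Real.log_lt_iff_lt_exp ht, hcdef]
          constructor <;> intro h <;> linarith
        have hmeasset : MeasurableSet {s : ℝ | B s < c} :=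
          measurableSet_lt hBmeas measurable_const
        rw [hset, hνdef, withDensity_apply _ hmeasset,
          Measure.restrict_restrict hmeasset]
        rcases le_or_gt c 0 with hc | hc
        · have hempty : {s : ℝ | B s < c} ∩ Set.Ioi 0 = ∅ := by
            ext s
            simp only [Set.mem_inter_iff, Set.mem_setOf_eq, Set.mem_Ioi, Set.mem_empty_iff_false,
              iff_false, not_and]
            intro hBs hs
            have := hBnonneg s hs.le
            linarith
          rw [hempty]
          simp [ENNReal.ofReal_eq_zero.mpr hc]
        · -- the first time B reaches c
          set S : Set ℝ := {s : ℝ | 0 ≤ s ∧ c ≤ B s} with hSdef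
          have hne : S.Nonempty := by
            have hdiv : 0 ≤ c / b₀ := div_nonneg hc.le hb₀.le
            refine ⟨a₀ + c / b₀, by linarith, ?_⟩
            · have h1 := hBlb (a₀ + c / b₀) (by linarith)
              have h2 : b₀ * (a₀ + c / b₀ - a₀) = c := by field_simp; ring
              linarith
          have hbdd : BddBelow S := ⟨0, fun x hx => hx.1⟩
          have hclosed : IsClosed S := by
            have : S = Set.Ici (0:ℝ) ∩ B ⁻¹' Set.Ici c := rfl
            rw [this]
            exact isClosed_Ici.inter (isClosed_Ici.preimage hBcont)
          set τ : ℝ := sInf S with hτdef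
          have hτmem : τ ∈ S := hclosed.csInf_mem hne hbdd
          have hτ0 : 0 ≤ τ := hτmem.1
          have hτpos : 0 < τ := by
            rcases hτ0.lt_or_eq with h | h
            · exact h
            · exfalso
              have := hτmem.2
              rw [← h, hB0] at this
              linarith
          have hBτ : B τ = c := by
            refine le_antisymm ?_ hτmem.2
            by_contra hgt
            push_neg at hgt
            have hU : {s | c < B s} ∩ Set.Ioi 0 ∈ 𝓝 τ :=
              Filter.inter_mem ((isOpen_lt continuous_const hBcont).mem_nhds hgt)
                (Ioi_mem_nhds hτpos)
            have hmem2 : ({s | c < B s} ∩ Set.Ioi 0) ∩ Set.Iio τ ∈ 𝓝[<] τ :=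
              Filter.inter_mem (mem_nhdsWithin_of_mem_nhds hU) self_mem_nhdsWithin
            obtain ⟨s, ⟨⟨hsU, hs0⟩, hsτ⟩⟩ := Filter.nonempty_of_mem hmem2
            have : τ ≤ s := csInf_le hbdd ⟨le_of_lt hs0, le_of_lt hsU⟩
            exact absurd hsτ (not_lt.mpr this)
          have hIoo : {s : ℝ | B s < c} ∩ Set.Ioi 0 = Set.Ioo 0 τ := by
            ext s
            simp only [Set.mem_inter_iff, Set.mem_setOf_eq, Set.mem_Ioi, Set.mem_Ioo]
            constructor
            · rintro ⟨hBs, hs⟩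
              refine ⟨hs, ?_⟩
              by_contra hle
              push_neg at hle
              have := hBmono hle
              rw [hBτ] at this
              linarith
            · rintro ⟨hs, hsτ⟩
              refine ⟨?_, hs⟩
              by_contra hge
              push_neg at hge
              have : τ ≤ s := csInf_le hbdd ⟨hs.le, hge⟩
              linarith
          rw [hIoo]
          have hb'int : IntegrableOn b' (Set.Ioo 0 τ) := by
            have := (intervalIntegrable_iff_integrableOn_Ioc_of_le hτ0).mp (hint 0 τ)
            exact this.mono_set Set.Ioo_subset_Ioc_self
          rw [← ofReal_integral_eq_lintegral_ofReal hb'int.integrable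
            (ae_of_all _ (fun s => hb'_nonneg s))]
          congr 1
          rw [← integral_Ioc_eq_integral_Ioo, ← intervalIntegral.integral_of_le hτ0]
          exact hBτ
      rw [hstep1, hstep2]
      have hsplit : Set.Ioi (0:ℝ) = Set.Ioc (0:ℝ) 1 ∪ Set.Ioi 1 :=
        (Set.Ioc_union_Ioi_eq_Ioi zero_le_one).symm
      rw [setLIntegral_congr_fun measurableSet_Ioi
        (fun t (ht : t ∈ Set.Ioi (0:ℝ)) => hkey t ht), hsplit,
        lintegral_union measurableSet_Ioi (Set.Ioc_disjoint_Ioi le_rfl)]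
      have hright : ∫⁻ t in Set.Ioi (1:ℝ), ENNReal.ofReal (-Real.log t) = 0 := by
        rw [setLIntegral_congr_fun measurableSet_Ioi
          (fun t (ht : t ∈ Set.Ioi (1:ℝ)) => ?_)]
        · exact lintegral_zero
        · have : 0 ≤ Real.log t := Real.log_nonneg (le_of_lt ht)
          simp only [ENNReal.ofReal_eq_zero]
          linarith
      have hleft : ∫⁻ t in Set.Ioc (0:ℝ) 1, ENNReal.ofReal (-Real.log t) = 1 := by
        rw [← ofReal_integral_eq_lintegral_ofReal aux_neg_log_integrable.integrable ?_]
        · rw [aux_neg_log_integral, ENNReal.ofReal_one]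
        · rw [EventuallyLE, ae_restrict_iff' measurableSet_Ioc]
          filter_upwards with t ht
          simpa using Real.log_nonpos ht.1.le ht.2
      rw [hright, hleft, add_zero]
    rw [hlin]
    exact ENNReal.toReal_one
  refine ⟨hcont, hanti, hf0, htend, ?_⟩
  intro c hc
  have hev : ∀ᶠ y in atTop, f y < c := htend.eventually_lt_const hc.1
  obtain ⟨Y, hY1, hY2⟩ := (hev.and (eventually_ge_atTop (0:ℝ))).exists
  have hcont' : ContinuousOn f (Set.Icc 0 Y) := hcont.mono (fun x hx => hx.1)
  have hmem : c ∈ Set.Ioo (f Y) (f 0) := ⟨hY1, by rw [hf0]; exact hc.2⟩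
  have := intermediate_value_Ioo' hY2 hcont' hmem
  obtain ⟨y, hy, hyc⟩ := this
  exact ⟨y, hy.1, hyc⟩
end

section
/- Let b : ℝ₊ → ℝ₊ be measurable and locally integrable, and suppose there exist a₀ > 0 and b₀ > 0 with b(u) ≥ b₀ for all u ≥ a₀. Then for every α > 0, every a ≥ 0 and every t ≥ a₀: ∫₀^t b(a + s) · exp(−∫_a^{a+s} b(u) du) · e^{−α s} ds ≥ e^{−α a₀} − e^{−α t} − (α/(α + b₀)) · e^{−α a₀}. -/
open MeasureTheory Set intervalIntegral

lemma key_ineq (c : ℝ → ℝ) (t : ℝ) (ht : 0 ≤ t)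
    (hc : IntervalIntegrable c volume 0 t)
    (hc0 : ∀ s ∈ Set.Icc (0:ℝ) t, 0 ≤ c s) :
    1 - Real.exp (-(∫ s in (0:ℝ)..t, c s)) ≤
      ∫ s in (0:ℝ)..t, c s * Real.exp (-(∫ u in (0:ℝ)..s, c u)) := by
  set C : ℝ → ℝ := fun s => ∫ u in (0:ℝ)..s, c u with hCdef
  have huIcc : Set.uIcc (0:ℝ) t = Set.Icc 0 t := Set.uIcc_of_le ht
  have hcIcc : IntegrableOn c (Set.Icc (0:ℝ) t) :=
    (intervalIntegrable_iff_integrableOn_Icc_of_le ht).mp hc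
  -- interval integrability on subintervals
  have hsub : ∀ x ∈ Set.Icc (0:ℝ) t, ∀ y ∈ Set.Icc (0:ℝ) t, Set.uIcc x y ⊆ Set.Icc (0:ℝ) t := by
    intro x hx y hy
    exact Set.uIcc_subset_Icc hx hy
  have hcII : ∀ x ∈ Set.Icc (0:ℝ) t, ∀ y ∈ Set.Icc (0:ℝ) t, IntervalIntegrable c volume x y := by
    intro x hx y hy
    exact (hcIcc.mono_set (hsub x hx y hy)).intervalIntegrable
  -- C y = C x + ∫ x..y
  have hCadd : ∀ x ∈ Set.Icc (0:ℝ) t, ∀ y ∈ Set.Icc (0:ℝ) t,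
      C y - C x = ∫ u in x..y, c u := by
    intro x hx y hy
    have h1 : IntervalIntegrable c volume 0 x := hcII 0 (Set.left_mem_Icc.2 ht) x hx
    have h2 : IntervalIntegrable c volume x y := hcII x hx y hy
    simp only [hCdef]
    rw [eq_comm, ← intervalIntegral.integral_add_adjacent_intervals h1 h2]
    ring
  have hCmono : ∀ x ∈ Set.Icc (0:ℝ) t, ∀ y ∈ Set.Icc (0:ℝ) t, x ≤ y → C x ≤ C y := by
    intro x hx y hy hxy
    have := hCadd x hx y hy
    have hpos : 0 ≤ ∫ u in x..y, c u :=
      intervalIntegral.integral_nonneg hxy (fun u hu => hc0 u ⟨hx.1.trans hu.1, hu.2.trans hy.2⟩)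
    linarith
  have hCcont : ContinuousOn C (Set.Icc (0:ℝ) t) := by
    have := intervalIntegral.continuousOn_primitive_interval (μ := volume) (a := (0:ℝ)) (b := t)
      (by rwa [huIcc])
    rwa [huIcc] at this
  have hC0 : C 0 = 0 := intervalIntegral.integral_same
  -- integrand
  set h : ℝ → ℝ := fun s => c s * Real.exp (-(C s)) with hhdef
  have hexpcont : ContinuousOn (fun s => Real.exp (-(C s))) (Set.Icc (0:ℝ) t) :=
    Real.continuous_exp.comp_continuousOn hCcont.neg
  have hhII : ∀ x ∈ Set.Icc (0:ℝ) t, ∀ y ∈ Set.Icc (0:ℝ) t, IntervalIntegrable h volume x y := by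
    intro x hx y hy
    exact (hcII x hx y hy).mul_continuousOn (hexpcont.mono (hsub x hx y hy))
  set I : ℝ := ∫ s in (0:ℝ)..t, h s with hIdef
  have hI0 : 0 ≤ I :=
    intervalIntegral.integral_nonneg ht
      (fun s hs => mul_nonneg (hc0 s hs) (Real.exp_pos _).le)
  -- main step : ∀ δ > 0
  have main : ∀ δ : ℝ, 0 < δ → 1 - Real.exp (-(C t)) ≤ Real.exp δ * I := by
    intro δ hδ
    rcases eq_or_lt_of_le ht with rfl | htpos
    · simp [hC0, hIdef, mul_nonneg (Real.exp_pos δ).le hI0]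
    -- uniform continuity
    obtain ⟨ε, hε, hmod⟩ := (Metric.uniformContinuousOn_iff.mp
      (isCompact_Icc.uniformContinuousOn_of_continuous hCcont)) δ hδ
    obtain ⟨n, hn⟩ := exists_nat_gt (t / ε)
    have hnpos : 0 < (n : ℝ) := lt_of_lt_of_le (div_pos htpos hε) hn.le
    set p : ℕ → ℝ := fun i => (i : ℝ) * (t / n) with hpdef
    have hp0 : p 0 = 0 := by simp [hpdef]
    have hpn : p n = t := by simp only [hpdef]; field_simp
    have hpmem : ∀ i : ℕ, i ≤ n → p i ∈ Set.Icc (0:ℝ) t := by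
      intro i hi
      have h1 : (i:ℝ) ≤ (n:ℝ) := by exact_mod_cast hi
      have h2 : (i:ℝ) * (t/n) ≤ (n:ℝ) * (t/n) :=
        mul_le_mul_of_nonneg_right h1 (div_nonneg ht hnpos.le)
      have h3 : (n:ℝ) * (t/n) = t := by field_simp
      simp only [hpdef, Set.mem_Icc]
      exact ⟨mul_nonneg (Nat.cast_nonneg i) (div_nonneg ht hnpos.le), by linarith⟩
    have hstep : ∀ i : ℕ, p (i+1) - p i = t / n := by
      intro i; simp only [hpdef]; push_cast; ring
    -- telescoping
    have htel : (∑ i ∈ Finset.range n, (Real.exp (-(C (p i))) - Real.exp (-(C (p (i+1)))))) =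
        1 - Real.exp (-(C t)) := by
      rw [Finset.sum_range_sub' (fun i => Real.exp (-(C (p i))))]
      rw [hp0, hpn, hC0]
      simp
    have hsum : (∑ i ∈ Finset.range n, ∫ s in p i..p (i+1), h s) = I := by
      rw [intervalIntegral.sum_integral_adjacent_intervals
        (fun k hk => hhII (p k) (hpmem k hk.le) (p (k+1)) (hpmem (k+1) hk))]
      rw [hp0, hpn]
    -- per-piece
    have hpiece : ∀ i ∈ Finset.range n,
        Real.exp (-(C (p i))) - Real.exp (-(C (p (i+1)))) ≤
          Real.exp δ * ∫ s in p i..p (i+1), h s := by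
      intro i hi
      rw [Finset.mem_range] at hi
      set x := p i
      set y := p (i+1)
      have hx : x ∈ Set.Icc (0:ℝ) t := hpmem i hi.le
      have hy : y ∈ Set.Icc (0:ℝ) t := hpmem (i+1) hi
      have hs : y - x = t / n := hstep i
      have hxy : x ≤ y := by
        have hq : 0 < t / n := div_pos htpos hnpos
        linarith
      set Δ := C y - C x with hΔdef
      have hΔ0 : 0 ≤ Δ := sub_nonneg.2 (hCmono x hx y hy hxy)
      have hΔδ : Δ ≤ δ := by
        have hdist : dist x y < ε := by
          rw [Real.dist_eq, abs_sub_comm, hs, abs_of_pos (div_pos htpos hnpos)]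
          have h5 : t < n * ε := by
            have := (div_lt_iff₀ hε).mp hn
            linarith
          rw [div_lt_iff₀ hnpos]
          linarith
        have h6 := hmod x hx y hy hdist
        rw [Real.dist_eq, abs_sub_comm] at h6
        have h7 : Δ = |C y - C x| := (abs_of_nonneg hΔ0).symm
        linarith [h7 ▸ h6]
      have hΔint : Δ = ∫ u in x..y, c u := hCadd x hx y hy
      have e1 : Real.exp (-(C x)) - Real.exp (-(C y)) = Real.exp (-(C x)) * (1 - Real.exp (-Δ)) := by
        rw [mul_sub, mul_one, ← Real.exp_add]
        congr 2
        simp only [hΔdef]; ring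
      have e2 : 1 - Real.exp (-Δ) ≤ Δ := by
        have := Real.add_one_le_exp (-Δ)
        linarith
      have e3 : Real.exp (-(C x)) = Real.exp Δ * Real.exp (-(C y)) := by
        rw [← Real.exp_add]; congr 1; simp only [hΔdef]; ring
      have e4 : Real.exp (-(C y)) * Δ ≤ ∫ s in x..y, h s := by
        have : Real.exp (-(C y)) * Δ = ∫ s in x..y, c s * Real.exp (-(C y)) := by
          rw [intervalIntegral.integral_mul_const, ← hΔint]; ring
        rw [this]
        apply intervalIntegral.integral_mono_on hxy
          ((hcII x hx y hy).mul_const _) (hhII x hx y hy)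
        intro s hs
        have hsmem : s ∈ Set.Icc (0:ℝ) t := ⟨hx.1.trans hs.1, hs.2.trans hy.2⟩
        exact mul_le_mul_of_nonneg_left
          (Real.exp_le_exp.2 (neg_le_neg (hCmono s hsmem y hy hs.2))) (hc0 s hsmem)
      calc Real.exp (-(C x)) - Real.exp (-(C y)) = Real.exp (-(C x)) * (1 - Real.exp (-Δ)) := e1
      _ ≤ Real.exp (-(C x)) * Δ := mul_le_mul_of_nonneg_left e2 (Real.exp_pos _).le
      _ = Real.exp Δ * (Real.exp (-(C y)) * Δ) := by rw [e3]; ring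
      _ ≤ Real.exp δ * (Real.exp (-(C y)) * Δ) := by
          apply mul_le_mul_of_nonneg_right (Real.exp_le_exp.2 hΔδ)
          exact mul_nonneg (Real.exp_pos _).le hΔ0
      _ ≤ Real.exp δ * ∫ s in x..y, h s :=
          mul_le_mul_of_nonneg_left e4 (Real.exp_pos _).le
    calc 1 - Real.exp (-(C t)) = ∑ i ∈ Finset.range n,
          (Real.exp (-(C (p i))) - Real.exp (-(C (p (i+1))))) := htel.symm
    _ ≤ ∑ i ∈ Finset.range n, Real.exp δ * ∫ s in p i..p (i+1), h s :=
        Finset.sum_le_sum hpiece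
    _ = Real.exp δ * I := by rw [← Finset.mul_sum, hsum]
  -- take δ → 0
  have htend : Filter.Tendsto (fun δ : ℝ => Real.exp δ * I) (nhdsWithin 0 (Set.Ioi 0))
      (nhds (Real.exp 0 * I)) :=
    (((Real.continuous_exp.tendsto 0).mul tendsto_const_nhds)).mono_left nhdsWithin_le_nhds
  have := ge_of_tendsto htend (Filter.eventually_of_mem self_mem_nhdsWithin (fun δ hδ => main δ hδ))
  simpa using this
lemma exp_integral_aux (k x y : ℝ) (hk : 0 < k) :
    ∫ s in x..y, Real.exp (-(k*s)) = (Real.exp (-(k*x)) - Real.exp (-(k*y)))/k := by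
  have hd : ∀ s ∈ Set.uIcc x y,
      HasDerivAt (fun s => -(Real.exp (-(k*s))/k)) (Real.exp (-(k*s))) s := by
    intro s _
    have h1 : HasDerivAt (fun s : ℝ => -(k*s)) (-k) s := by
      simpa [neg_mul] using (hasDerivAt_id s).const_mul (-k)
    have h3 := (h1.exp.div_const k).neg
    convert h3 using 1
    · rfl
    · rfl
    · rfl
    · rw [mul_neg, neg_div, neg_neg, mul_div_assoc, div_self hk.ne', mul_one]
  rw [intervalIntegral.integral_eq_sub_of_hasDerivAt hd
    (Continuous.intervalIntegrable (by fun_prop) x y)]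
  ring

theorem statement15 (b : ℝ → ℝ) (hb_meas : Measurable b)
    (hb_nonneg : ∀ u, 0 ≤ u → 0 ≤ b u)
    (hb_loc : LocallyIntegrableOn b (Set.Ici 0))
    (a₀ b₀ : ℝ) (ha₀ : 0 < a₀) (hb₀ : 0 < b₀)
    (hlb : ∀ u, a₀ ≤ u → b₀ ≤ b u)
    (α a t : ℝ) (hα : 0 < α) (ha : 0 ≤ a) (ht : a₀ ≤ t) :
    Real.exp (-α * a₀) - Real.exp (-α * t) - (α / (α + b₀)) * Real.exp (-α * a₀) ≤
      ∫ s in (0:ℝ)..t,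
        b (a + s) * Real.exp (-(∫ u in a..(a + s), b u)) * Real.exp (-α * s) := by
  have ht0 : (0:ℝ) ≤ t := ha₀.le.trans ht
  set g : ℝ → ℝ := fun s => b (a + s) with hgdef
  set B : ℝ → ℝ := fun s => ∫ u in (0:ℝ)..s, g u with hBdef
  have hBeq : ∀ s : ℝ, (∫ u in a..(a + s), b u) = B s := by
    intro s
    simp only [hBdef, hgdef]
    rw [intervalIntegral.integral_comp_add_left b a]
    norm_num
  -- integrability of g on [0, t]
  have hbint : IntegrableOn b (Set.Icc a (a + t)) := by
    apply hb_loc.integrableOn_compact_subset ?_ isCompact_Icc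
    intro u hu
    exact le_trans ha hu.1
  have hbII : IntervalIntegrable b volume a (a + t) :=
    (intervalIntegrable_iff_integrableOn_Icc_of_le (by linarith)).mpr hbint
  have hgII : IntervalIntegrable g volume 0 t := by
    have := hbII.comp_add_left a
    simpa [hgdef] using this
  have hgIcc : IntegrableOn g (Set.Icc (0:ℝ) t) :=
    (intervalIntegrable_iff_integrableOn_Icc_of_le ht0).mp hgII
  have hgII' : ∀ x ∈ Set.Icc (0:ℝ) t, ∀ y ∈ Set.Icc (0:ℝ) t,
      IntervalIntegrable g volume x y := fun x hx y hy =>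
    (hgIcc.mono_set (Set.uIcc_subset_Icc hx hy)).intervalIntegrable
  have hg0 : ∀ s, 0 ≤ s → 0 ≤ g s := fun s hs => hb_nonneg _ (by linarith)
  have huIcc : Set.uIcc (0:ℝ) t = Set.Icc 0 t := Set.uIcc_of_le ht0
  have hBcont : ContinuousOn B (Set.Icc (0:ℝ) t) := by
    have := intervalIntegral.continuousOn_primitive_interval (μ := volume) (a := (0:ℝ)) (b := t)
      (by rwa [huIcc])
    rwa [huIcc] at this
  have hB0 : ∀ s ∈ Set.Icc (0:ℝ) t, 0 ≤ B s := by
    intro s hs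
    exact intervalIntegral.integral_nonneg hs.1 (fun u hu => hg0 u hu.1)
  -- B s ≥ b₀ (s - a₀) for s ∈ [a₀, t]
  have ha₀mem : a₀ ∈ Set.Icc (0:ℝ) t := ⟨ha₀.le, ht⟩
  have h0mem : (0:ℝ) ∈ Set.Icc (0:ℝ) t := ⟨le_rfl, ht0⟩
  have htmem : t ∈ Set.Icc (0:ℝ) t := ⟨ht0, le_rfl⟩
  have hBlb : ∀ s ∈ Set.Icc a₀ t, b₀ * (s - a₀) ≤ B s := by
    intro s hs
    have hsmem : s ∈ Set.Icc (0:ℝ) t := ⟨ha₀.le.trans hs.1, hs.2⟩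
    have h1 : IntervalIntegrable g volume 0 a₀ := hgII' 0 h0mem a₀ ha₀mem
    have h2 : IntervalIntegrable g volume a₀ s := hgII' a₀ ha₀mem s hsmem
    have hsplit : B s = (∫ u in (0:ℝ)..a₀, g u) + ∫ u in a₀..s, g u :=
      (intervalIntegral.integral_add_adjacent_intervals h1 h2).symm
    have hpart1 : 0 ≤ ∫ u in (0:ℝ)..a₀, g u :=
      intervalIntegral.integral_nonneg ha₀.le (fun u hu => hg0 u hu.1)
    have hpart2 : b₀ * (s - a₀) ≤ ∫ u in a₀..s, g u := by
      have hmono := intervalIntegral.integral_mono_on (f := fun _ => b₀) (g := g) hs.1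
        intervalIntegrable_const h2 ?_
      · rw [intervalIntegral.integral_const, smul_eq_mul] at hmono
        linarith [hmono]
      · intro u hu
        exact hlb (a + u) (by linarith [hu.1])
    linarith
  -- apply key lemma to c = g + α
  set c : ℝ → ℝ := fun s => g s + α with hcdef
  have hcII : IntervalIntegrable c volume 0 t := hgII.add intervalIntegrable_const
  have hkey := key_ineq c t ht0 hcII
    (fun s hs => add_nonneg (hg0 s hs.1) hα.le)
  have hCeq : ∀ s ∈ Set.Icc (0:ℝ) t, (∫ u in (0:ℝ)..s, c u) = B s + α * s := by
    intro s hs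
    simp only [hcdef]
    rw [intervalIntegral.integral_add (hgII' 0 h0mem s hs) intervalIntegrable_const,
      intervalIntegral.integral_const]
    simp only [hBdef, smul_eq_mul, sub_zero]
    ring
  -- rewrite RHS of key
  have hexpBcont : ContinuousOn (fun s => Real.exp (-(B s))) (Set.Icc (0:ℝ) t) :=
    Real.continuous_exp.comp_continuousOn hBcont.neg
  have hexpαcont : Continuous (fun s : ℝ => Real.exp (-(α * s))) := by fun_prop
  have hJII : IntervalIntegrable (fun s => g s * Real.exp (-(B s)) * Real.exp (-(α * s)))
      volume 0 t :=
    (hgII.mul_continuousOn (by rwa [huIcc])).mul_continuousOn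
      (hexpαcont.continuousOn)
  have hKfII : IntervalIntegrable (fun s => Real.exp (-(B s)) * Real.exp (-(α * s)))
      volume 0 t :=
    ContinuousOn.intervalIntegrable (by rw [huIcc]; exact hexpBcont.mul hexpαcont.continuousOn)
  have hRHS : (∫ s in (0:ℝ)..t, c s * Real.exp (-(∫ u in (0:ℝ)..s, c u))) =
      (∫ s in (0:ℝ)..t, g s * Real.exp (-(B s)) * Real.exp (-(α * s)))
        + α * ∫ s in (0:ℝ)..t, Real.exp (-(B s)) * Real.exp (-(α * s)) := by
    rw [← intervalIntegral.integral_const_mul,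
      ← intervalIntegral.integral_add hJII (hKfII.const_mul α)]
    apply intervalIntegral.integral_congr
    intro s hs
    rw [huIcc] at hs
    have h1 := hCeq s hs
    simp only [hcdef]
    rw [h1, neg_add, Real.exp_add]
    ring
  set J := ∫ s in (0:ℝ)..t, g s * Real.exp (-(B s)) * Real.exp (-(α * s)) with hJdef
  set K := ∫ s in (0:ℝ)..t, Real.exp (-(B s)) * Real.exp (-(α * s)) with hKdef
  -- key inequality in usable form
  have hCt : (∫ s in (0:ℝ)..t, c s) = B t + α * t := hCeq t htmem
  have hkey2 : 1 - Real.exp (-(B t + α * t)) ≤ J + α * K := by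
    rw [← hCt, ← hRHS]; exact hkey
  have hexpBt : Real.exp (-(B t + α * t)) ≤ Real.exp (-(α * t)) :=
    Real.exp_le_exp.2 (by linarith [hB0 t htmem])
  -- bound α K
  have hK1II : IntervalIntegrable (fun s => Real.exp (-(B s)) * Real.exp (-(α * s)))
      volume 0 a₀ := ContinuousOn.intervalIntegrable (by
        apply ContinuousOn.mono (s := Set.Icc (0:ℝ) t) (hexpBcont.mul hexpαcont.continuousOn)
        rw [Set.uIcc_of_le ha₀.le]
        exact Set.Icc_subset_Icc le_rfl ht)
  have hK2II : IntervalIntegrable (fun s => Real.exp (-(B s)) * Real.exp (-(α * s)))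
      volume a₀ t := ContinuousOn.intervalIntegrable (by
        apply ContinuousOn.mono (s := Set.Icc (0:ℝ) t) (hexpBcont.mul hexpαcont.continuousOn)
        rw [Set.uIcc_of_le ht]
        exact Set.Icc_subset_Icc ha₀.le le_rfl)
  have hKsplit : K = (∫ s in (0:ℝ)..a₀, Real.exp (-(B s)) * Real.exp (-(α * s)))
      + ∫ s in a₀..t, Real.exp (-(B s)) * Real.exp (-(α * s)) :=
    (intervalIntegral.integral_add_adjacent_intervals hK1II hK2II).symm
  have hK1 : (∫ s in (0:ℝ)..a₀, Real.exp (-(B s)) * Real.exp (-(α * s))) ≤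
      (Real.exp (-(α * 0)) - Real.exp (-(α * a₀))) / α := by
    rw [← exp_integral_aux α 0 a₀ hα]
    apply intervalIntegral.integral_mono_on ha₀.le hK1II
      (Continuous.intervalIntegrable (by fun_prop) _ _)
    intro s hs
    have hsmem : s ∈ Set.Icc (0:ℝ) t := ⟨hs.1, hs.2.trans ht⟩
    have h1 : Real.exp (-(B s)) ≤ 1 := Real.exp_le_one_iff.2 (by linarith [hB0 s hsmem])
    nlinarith [Real.exp_pos (-(α * s)), h1]
  have hK2 : (∫ s in a₀..t, Real.exp (-(B s)) * Real.exp (-(α * s))) ≤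
      Real.exp (b₀ * a₀) * ((Real.exp (-((α + b₀) * a₀)) - Real.exp (-((α + b₀) * t))) / (α + b₀)) := by
    rw [← exp_integral_aux (α + b₀) a₀ t (by linarith), ← intervalIntegral.integral_const_mul]
    apply intervalIntegral.integral_mono_on ht hK2II
      (Continuous.intervalIntegrable (by fun_prop) _ _)
    intro s hs
    rw [← Real.exp_add, ← Real.exp_add]
    exact Real.exp_le_exp.2 (by nlinarith [hBlb s hs])
  -- combine
  have hαb : (0:ℝ) < α + b₀ := by linarith
  have hK1' : α * (∫ s in (0:ℝ)..a₀, Real.exp (-(B s)) * Real.exp (-(α * s))) ≤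
      1 - Real.exp (-(α * a₀)) := by
    have h2 := mul_le_mul_of_nonneg_left hK1 hα.le
    have h0 : Real.exp (-(α * 0)) = 1 := by norm_num
    rw [h0] at h2
    have h3 : α * ((1 - Real.exp (-(α * a₀))) / α) = 1 - Real.exp (-(α * a₀)) := by
      field_simp
    linarith [h3 ▸ h2]
  have hK2' : α * (∫ s in a₀..t, Real.exp (-(B s)) * Real.exp (-(α * s))) ≤
      α / (α + b₀) * Real.exp (-(α * a₀)) := by
    have h2 := mul_le_mul_of_nonneg_left hK2 hα.le
    have hE : Real.exp (b₀ * a₀) * Real.exp (-((α + b₀) * a₀)) = Real.exp (-(α * a₀)) := by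
      rw [← Real.exp_add]; ring_nf
    have hexpand : α * (Real.exp (b₀ * a₀) *
        ((Real.exp (-((α + b₀) * a₀)) - Real.exp (-((α + b₀) * t))) / (α + b₀))) =
        α / (α + b₀) * (Real.exp (b₀ * a₀) * Real.exp (-((α + b₀) * a₀)))
          - α / (α + b₀) * (Real.exp (b₀ * a₀) * Real.exp (-((α + b₀) * t))) := by
      field_simp
    have hpos : 0 ≤ α / (α + b₀) * (Real.exp (b₀ * a₀) * Real.exp (-((α + b₀) * t))) := by
      positivity
    rw [hexpand, hE] at h2
    linarith
  have hKmul : α * K = α * (∫ s in (0:ℝ)..a₀, Real.exp (-(B s)) * Real.exp (-(α * s)))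
      + α * (∫ s in a₀..t, Real.exp (-(B s)) * Real.exp (-(α * s))) := by
    rw [hKsplit]; ring
  have hTeq : (∫ s in (0:ℝ)..t,
      b (a + s) * Real.exp (-(∫ u in a..(a + s), b u)) * Real.exp (-α * s)) = J := by
    simp only [hJdef]
    refine intervalIntegral.integral_congr (fun s _ => ?_)
    rw [hBeq s, neg_mul]
  rw [hTeq, neg_mul α a₀, neg_mul α t]
  linarith
end

section
/- Let δ, κ > 0, set r = min(δ, κ)/10, let γ, ω ∈ ℕ* with γ ≤ ω, let m₀ ∈ ℕ with m₀ ≥ ω − γ, and let Y > 0. For y ≥ 0 and s ∈ ℝ define F(y, s) = ∫_{u ∈ [0,δ]^{γ−1}} ∫_{v ∈ [0,κ]^{ω}} g₁(s, u, v) · g₂(y, s, u, v) du dv, where g₁(s, u, v) = 1{ s ∈ [ −δ + Σ_{i=1}^{γ−1}(v_i − u_i) + Σ_{i=γ}^{ω} v_i , Σ_{i=1}^{γ−1}(v_i − u_i) + Σ_{i=γ}^{ω} v_i ] }, and g₂(y, s, u, v) = 1{ y + s − Σ_{i=γ+1}^{ω} v_i ≥ 0 } if γ = 1, and g₂(y,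 s, u, v) = 1{ ∀ l ∈ {1, …, γ−1} : y + Σ_{i=1}^{l}(v_i − u_i) ≥ 0 } · 1{ y + s − Σ_{i=γ+1}^{ω} v_i ≥ 0 } if γ ≥ 2. Then there exists c > 0 such that for all y ∈ [0, Y] and all s ∈ [max(−3r, −y), 3r]: F(y, s) ≥ c · (y + s)^{m₀}. -/
set_option maxHeartbeats 1000000

open MeasureTheory Finset

private lemma fin_filter_lt_card (n k : ℕ) (h : k ≤ n) :
    (Finset.univ.filter fun i : Fin n => (i : ℕ) < k).card = k := by
  have heq : (Finset.univ.filter fun i : Fin n => (i : ℕ) < k)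
      = Finset.attachFin (Finset.range k)
        (fun m hm => lt_of_lt_of_le (Finset.mem_range.mp hm) h) := by
    ext i
    simp [Finset.mem_attachFin]
  rw [heq, Finset.card_attachFin, Finset.card_range]

private lemma fin_filter_le_card (n k : ℕ) (h : k ≤ n) :
    (Finset.univ.filter fun i : Fin n => k ≤ (i : ℕ)).card = n - k := by
  have h1 := Finset.card_filter_add_card_filter_not
    (s := (Finset.univ : Finset (Fin n))) (p := fun i : Fin n => (i : ℕ) < k)
  have h2 : (Finset.univ.filter fun i : Fin n => ¬ (i : ℕ) < k)
      = (Finset.univ.filter fun i : Fin n => k ≤ (i : ℕ)) := by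
    apply Finset.filter_congr
    intro i _
    simp [not_lt]
  rw [fin_filter_lt_card n k h, h2, Finset.card_univ, Fintype.card_fin] at h1
  omega

theorem statement17 (δ κ : ℝ) (hδ : 0 < δ) (hκ : 0 < κ)
    (γ ω : ℕ) (hγ : 0 < γ) (hγω : γ ≤ ω)
    (m₀ : ℕ) (hm₀ : ω - γ ≤ m₀) (Y : ℝ) (hY : 0 < Y) :
    ∃ c : ℝ, 0 < c ∧ ∀ y s : ℝ, y ∈ Set.Icc (0:ℝ) Y →
      s ∈ Set.Icc (max (-(3 * (min δ κ / 10))) (-y)) (3 * (min δ κ / 10)) →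
      c * (y + s) ^ m₀ ≤
        ∫ u : Fin (γ-1) → ℝ in Set.univ.pi fun _ => Set.Icc (0:ℝ) δ,
          ∫ v : Fin ω → ℝ in Set.univ.pi fun _ => Set.Icc (0:ℝ) κ,
            (if -δ + ((∑ i : Fin (γ-1), (v (Fin.castLE (by omega) i) - u i)) +
                  ∑ i ∈ Finset.univ.filter (fun i : Fin ω => γ - 1 ≤ (i : ℕ)), v i) ≤ s ∧
                s ≤ (∑ i : Fin (γ-1), (v (Fin.castLE (by omega) i) - u i)) +
                  ∑ i ∈ Finset.univ.filter (fun i : Fin ω => γ - 1 ≤ (i : ℕ)), v i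
              then (1:ℝ) else 0) *
            (if (∀ l : Fin (γ-1), 0 ≤ y +
                    ∑ i ∈ Finset.univ.filter (fun i : Fin (γ-1) => (i : ℕ) ≤ (l : ℕ)),
                      (v (Fin.castLE (by omega) i) - u i)) ∧
                0 ≤ y + s - ∑ i ∈ Finset.univ.filter (fun i : Fin ω => γ ≤ (i : ℕ)), v i
              then (1:ℝ) else 0) := by
  have hω : 0 < ω := lt_of_lt_of_le hγ hγω
  have hγR : (0:ℝ) < γ := by exact_mod_cast hγ
  have hωR : (0:ℝ) < ω := by exact_mod_cast hω
  have hγ1 : (1:ℝ) ≤ γ := by exact_mod_cast hγ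
  have hω1 : (1:ℝ) ≤ ω := by exact_mod_cast hω
  set r : ℝ := min δ κ / 10 with hr_def
  have hr : 0 < r := by
    have : 0 < min δ κ := lt_min hδ hκ
    rw [hr_def]; linarith
  have hrδ : 10 * r ≤ δ := by
    have := min_le_left δ κ; rw [hr_def]; linarith
  have hrκ : 10 * r ≤ κ := by
    have := min_le_right δ κ; rw [hr_def]; linarith
  set ε : ℝ := r / (2 * γ) with hε_def
  have hε : 0 < ε := div_pos hr (by linarith)
  have hεr : 2 * (γ:ℝ) * ε = r := by
    rw [hε_def]; field_simp
  have hεler : ε ≤ r := by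
    rw [hε_def]
    exact div_le_self hr.le (by linarith)
  set T : ℝ := Y + 3 * r with hT_def
  have hT : 0 < T := by rw [hT_def]; linarith
  have hεT : ε ≤ T := by rw [hT_def]; linarith
  set k : ℕ := ω - γ with hk_def
  refine ⟨ε ^ (2 * (γ - 1)) * r * (ε / (ω * T)) ^ k / T ^ (m₀ - k), ?_, ?_⟩
  · exact div_pos (mul_pos (mul_pos (pow_pos hε _) hr)
      (pow_pos (div_pos hε (mul_pos hωR hT)) _)) (pow_pos hT _)
  intro y s hy hs
  obtain ⟨hy0, hyY⟩ := hy
  obtain ⟨hs1, hs2⟩ := hs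
  have hs3 : -(3 * r) ≤ s := le_trans (le_max_left _ _) hs1
  have hsy : -y ≤ s := le_trans (le_max_right _ _) hs1
  set t : ℝ := y + s with ht_def
  have ht0 : 0 ≤ t := by rw [ht_def]; linarith
  have htT : t ≤ T := by rw [ht_def, hT_def]; linarith
  set b : ℝ := min t ε / ω with hb_def
  have hb0 : 0 ≤ b := div_nonneg (le_min ht0 hε.le) hωR.le
  have hbω : b * ω = min t ε := by
    rw [hb_def]; field_simp
  have hbωε : b * ω ≤ ε := by rw [hbω]; exact min_le_right _ _
  have hbωt : b * ω ≤ t := by rw [hbω]; exact min_le_left _ _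
  have hbε : b ≤ ε := by nlinarith
  -- the sets
  set U : Set (Fin (γ-1) → ℝ) := Set.univ.pi fun _ => Set.Icc (0:ℝ) δ with hU_def
  set V : Set (Fin ω → ℝ) := Set.univ.pi fun _ => Set.Icc (0:ℝ) κ with hV_def
  set U' : Set (Fin (γ-1) → ℝ) := Set.univ.pi fun _ => Set.Icc (0:ℝ) ε with hU'_def
  set lo : Fin ω → ℝ := fun i =>
    if (i:ℕ) < γ - 1 then ε else if (i:ℕ) = γ - 1 then 4*r else 0 with hlo_def
  set hi : Fin ω → ℝ := fun i =>
    if (i:ℕ) < γ - 1 then 2*ε else if (i:ℕ) = γ - 1 then 5*r else b with hhi_def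
  set V' : Set (Fin ω → ℝ) := Set.univ.pi fun i => Set.Icc (lo i) (hi i) with hV'_def
  set F : (Fin (γ-1) → ℝ) → (Fin ω → ℝ) → ℝ := fun u v =>
    (if -δ + ((∑ i : Fin (γ-1), (v (Fin.castLE (by omega) i) - u i)) +
          ∑ i ∈ Finset.univ.filter (fun i : Fin ω => γ - 1 ≤ (i : ℕ)), v i) ≤ s ∧
        s ≤ (∑ i : Fin (γ-1), (v (Fin.castLE (by omega) i) - u i)) +
          ∑ i ∈ Finset.univ.filter (fun i : Fin ω => γ - 1 ≤ (i : ℕ)), v i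
      then (1:ℝ) else 0) *
    (if (∀ l : Fin (γ-1), 0 ≤ y +
            ∑ i ∈ Finset.univ.filter (fun i : Fin (γ-1) => (i : ℕ) ≤ (l : ℕ)),
              (v (Fin.castLE (by omega) i) - u i)) ∧
        0 ≤ y + s - ∑ i ∈ Finset.univ.filter (fun i : Fin ω => γ ≤ (i : ℕ)), v i
      then (1:ℝ) else 0) with hF_def
  have hx₀lt : γ - 1 < ω := by omega
  set x₀ : Fin ω := ⟨γ - 1, hx₀lt⟩ with hx₀_def
  have hx₀v : ((x₀ : Fin ω) : ℕ) = γ - 1 := rfl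
  set g : (Fin (γ-1) → ℝ) → ℝ := fun u => ∫ v in V, F u v with hg_def
  show ε ^ (2 * (γ - 1)) * r * (ε / (↑ω * T)) ^ k / T ^ (m₀ - k) * t ^ m₀ ≤ ∫ u in U, g u
  clear_value r ε T k t b U V U' lo hi V' F x₀ g
  have hlole : ∀ i, lo i ≤ hi i := by
    intro i; simp only [hlo_def, hhi_def]; split_ifs <;> linarith
  have hlo0 : ∀ i, 0 ≤ lo i := by
    intro i; simp only [hlo_def]; split_ifs <;> linarith
  have hhiκ : ∀ i, hi i ≤ κ := by
    intro i; simp only [hhi_def]; split_ifs <;> linarith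
  have hU'U : U' ⊆ U := by
    rw [hU'_def, hU_def]
    apply Set.pi_mono
    intro i _
    exact Set.Icc_subset_Icc le_rfl (by linarith)
  have hV'V : V' ⊆ V := by
    rw [hV'_def, hV_def]
    apply Set.pi_mono
    intro i _
    exact Set.Icc_subset_Icc (hlo0 i) (hhiκ i)
  -- core pointwise estimate
  have hcore : ∀ u ∈ U', ∀ v ∈ V', F u v = 1 := by
    intro u hu v hv
    rw [hU'_def, Set.mem_pi] at hu
    rw [hV'_def, Set.mem_pi] at hv
    have hu' : ∀ i, 0 ≤ u i ∧ u i ≤ ε := by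
      intro i
      have := hu i (Set.mem_univ i)
      rwa [Set.mem_Icc] at this
    have hva : ∀ i : Fin ω, (i:ℕ) < γ - 1 → ε ≤ v i ∧ v i ≤ 2*ε := by
      intro i h
      have h2 := hv i (Set.mem_univ i)
      simp only [hlo_def, hhi_def, if_pos h, Set.mem_Icc] at h2
      exact h2
    have hvb : 4*r ≤ v x₀ ∧ v x₀ ≤ 5*r := by
      have h2 := hv x₀ (Set.mem_univ x₀)
      have e1 : ¬ ((x₀:ℕ) < γ - 1) := by omega
      have e2 : (x₀:ℕ) = γ - 1 := hx₀v
      simp only [hlo_def, hhi_def, if_neg e1, if_pos e2, Set.mem_Icc] at h2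
      exact h2
    have hvc : ∀ i : Fin ω, γ ≤ (i:ℕ) → 0 ≤ v i ∧ v i ≤ b := by
      intro i h
      have h2 := hv i (Set.mem_univ i)
      have e1 : ¬ ((i:ℕ) < γ - 1) := by omega
      have e2 : ¬ ((i:ℕ) = γ - 1) := by omega
      simp only [hlo_def, hhi_def, if_neg e1, if_neg e2, Set.mem_Icc] at h2
      exact h2
    have hterm : ∀ i : Fin (γ-1),
        0 ≤ v (Fin.castLE (by omega : γ-1 ≤ ω) i) - u i ∧
        v (Fin.castLE (by omega : γ-1 ≤ ω) i) - u i ≤ 2*ε := by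
      intro i
      have h1 := hva (Fin.castLE (by omega) i) (by simpa using i.isLt)
      have h2 := hu' i
      exact ⟨by linarith [h1.1, h2.2], by linarith [h1.2, h2.1]⟩
    have hS1nn : 0 ≤ ∑ i : Fin (γ-1), (v (Fin.castLE (by omega : γ-1 ≤ ω) i) - u i) :=
      Finset.sum_nonneg fun i _ => (hterm i).1
    have hS1le : ∑ i : Fin (γ-1), (v (Fin.castLE (by omega : γ-1 ≤ ω) i) - u i) ≤ r := by
      have h1 : ∑ i : Fin (γ-1), (v (Fin.castLE (by omega : γ-1 ≤ ω) i) - u i)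
          ≤ ∑ _i : Fin (γ-1), 2*ε :=
        Finset.sum_le_sum fun i _ => (hterm i).2
      rw [Finset.sum_const, Finset.card_univ, Fintype.card_fin, nsmul_eq_mul] at h1
      have h2 : ((γ-1:ℕ):ℝ) ≤ (γ:ℝ) := by exact_mod_cast Nat.sub_le γ 1
      have h3 : ((γ-1:ℕ):ℝ) * (2*ε) ≤ (γ:ℝ) * (2*ε) :=
        mul_le_mul_of_nonneg_right h2 (by linarith)
      linarith
    have hx₀A : x₀ ∈ Finset.univ.filter (fun i : Fin ω => γ - 1 ≤ (i : ℕ)) := by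
      simp only [Finset.mem_filter, Finset.mem_univ, true_and, hx₀v]
      omega
    have hS2lo : 4*r ≤ ∑ i ∈ Finset.univ.filter (fun i : Fin ω => γ - 1 ≤ (i : ℕ)), v i := by
      have h1 : ∑ i ∈ Finset.univ.filter (fun i : Fin ω => γ - 1 ≤ (i : ℕ)),
          (if i = x₀ then 4*r else 0)
          ≤ ∑ i ∈ Finset.univ.filter (fun i : Fin ω => γ - 1 ≤ (i : ℕ)), v i := by
        apply Finset.sum_le_sum
        intro i hiA
        by_cases hix : i = x₀
        · rw [if_pos hix, hix]; exact hvb.1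
        · rw [if_neg hix]
          rw [Finset.mem_filter] at hiA
          have hne : (i:ℕ) ≠ γ - 1 := by simpa [Fin.ext_iff, hx₀v] using hix
          exact (hvc i (by omega)).1
      rwa [Finset.sum_ite_eq' _ x₀ (fun _ => 4*r), if_pos hx₀A] at h1
    have hS2hi : ∑ i ∈ Finset.univ.filter (fun i : Fin ω => γ - 1 ≤ (i : ℕ)), v i
        ≤ 5*r + ε := by
      have hsplit := Finset.sum_erase_add
        (Finset.univ.filter (fun i : Fin ω => γ - 1 ≤ (i : ℕ))) v hx₀A
      have h1 : ∑ i ∈ (Finset.univ.filter (fun i : Fin ω => γ - 1 ≤ (i : ℕ))).erase x₀, v i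
          ≤ ((Finset.univ.filter (fun i : Fin ω => γ - 1 ≤ (i : ℕ))).erase x₀).card • b := by
        apply Finset.sum_le_card_nsmul
        intro i hiA
        obtain ⟨hix, hiA⟩ := Finset.mem_erase.mp hiA
        rw [Finset.mem_filter] at hiA
        have hne : (i:ℕ) ≠ γ - 1 := by simpa [Fin.ext_iff, hx₀v] using hix
        exact (hvc i (by omega)).2
      have h2 : (((Finset.univ.filter (fun i : Fin ω => γ - 1 ≤ (i : ℕ))).erase x₀).card : ℝ)
          ≤ (ω:ℝ) := by
        have := Finset.card_le_univ
          ((Finset.univ.filter (fun i : Fin ω => γ - 1 ≤ (i : ℕ))).erase x₀)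
        simp only [Finset.card_univ, Fintype.card_fin] at this
        exact_mod_cast this
      rw [nsmul_eq_mul] at h1
      have h4 := mul_le_mul_of_nonneg_right h2 hb0
      linarith [hvb.2]
    have hc1 : -δ + ((∑ i : Fin (γ-1), (v (Fin.castLE (by omega : γ-1 ≤ ω) i) - u i)) +
          ∑ i ∈ Finset.univ.filter (fun i : Fin ω => γ - 1 ≤ (i : ℕ)), v i) ≤ s ∧
        s ≤ (∑ i : Fin (γ-1), (v (Fin.castLE (by omega : γ-1 ≤ ω) i) - u i)) +
          ∑ i ∈ Finset.univ.filter (fun i : Fin ω => γ - 1 ≤ (i : ℕ)), v i := by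
      constructor
      · linarith
      · linarith
    have hc2 : (∀ l : Fin (γ-1), 0 ≤ y +
            ∑ i ∈ Finset.univ.filter (fun i : Fin (γ-1) => (i : ℕ) ≤ (l : ℕ)),
              (v (Fin.castLE (by omega : γ-1 ≤ ω) i) - u i)) ∧
        0 ≤ y + s - ∑ i ∈ Finset.univ.filter (fun i : Fin ω => γ ≤ (i : ℕ)), v i := by
      constructor
      · intro l
        have h0 : 0 ≤ ∑ i ∈ Finset.univ.filter (fun i : Fin (γ-1) => (i : ℕ) ≤ (l : ℕ)),
            (v (Fin.castLE (by omega : γ-1 ≤ ω) i) - u i) :=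
          Finset.sum_nonneg fun i _ => (hterm i).1
        linarith
      · have h1 : ∑ i ∈ Finset.univ.filter (fun i : Fin ω => γ ≤ (i : ℕ)), v i
            ≤ (Finset.univ.filter (fun i : Fin ω => γ ≤ (i : ℕ))).card • b := by
          apply Finset.sum_le_card_nsmul
          intro i hiB
          rw [Finset.mem_filter] at hiB
          exact (hvc i hiB.2).2
        have h2 : ((Finset.univ.filter (fun i : Fin ω => γ ≤ (i : ℕ))).card : ℝ) ≤ (ω:ℝ) := by
          have := Finset.card_le_univ (Finset.univ.filter (fun i : Fin ω => γ ≤ (i : ℕ)))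
          simp only [Finset.card_univ, Fintype.card_fin] at this
          exact_mod_cast this
        rw [nsmul_eq_mul] at h1
        have h4 := mul_le_mul_of_nonneg_right h2 hb0
        have h5 : (↑ω:ℝ) * b ≤ t := by rw [mul_comm]; exact hbωt
        have h3 : ∑ i ∈ Finset.univ.filter (fun i : Fin ω => γ ≤ (i : ℕ)), v i ≤ t :=
          h1.trans (h4.trans h5)
        rw [ht_def] at h3
        exact sub_nonneg.mpr h3
    simp only [hF_def]
    rw [if_pos hc1, if_pos hc2, one_mul]
  -- measurability
  have hFmeas : Measurable fun p : (Fin (γ-1) → ℝ) × (Fin ω → ℝ) => F p.1 p.2 := by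
    have hm1 : Measurable fun p : (Fin (γ-1) → ℝ) × (Fin ω → ℝ) =>
        (∑ i : Fin (γ-1), (p.2 (Fin.castLE (by omega : γ-1 ≤ ω) i) - p.1 i)) +
          ∑ i ∈ Finset.univ.filter (fun i : Fin ω => γ - 1 ≤ (i : ℕ)), p.2 i := by
      apply Measurable.add
      · exact Finset.measurable_sum _ fun i _ =>
          ((measurable_pi_apply _).comp measurable_snd).sub
            ((measurable_pi_apply _).comp measurable_fst)
      · exact Finset.measurable_sum _ fun i _ => (measurable_pi_apply _).comp measurable_snd
    have hm2 : ∀ l : Fin (γ-1), Measurable fun p : (Fin (γ-1) → ℝ) × (Fin ω → ℝ) =>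
        ∑ i ∈ Finset.univ.filter (fun i : Fin (γ-1) => (i : ℕ) ≤ (l : ℕ)),
          (p.2 (Fin.castLE (by omega : γ-1 ≤ ω) i) - p.1 i) := fun l =>
      Finset.measurable_sum _ fun i _ =>
        ((measurable_pi_apply _).comp measurable_snd).sub
          ((measurable_pi_apply _).comp measurable_fst)
    have hm3 : Measurable fun p : (Fin (γ-1) → ℝ) × (Fin ω → ℝ) =>
        ∑ i ∈ Finset.univ.filter (fun i : Fin ω => γ ≤ (i : ℕ)), p.2 i :=
      Finset.measurable_sum _ fun i _ => (measurable_pi_apply _).comp measurable_snd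
    simp only [hF_def]
    apply Measurable.mul
    · refine Measurable.ite ?_ measurable_const measurable_const
      exact MeasurableSet.inter
        (measurableSet_le (measurable_const.add hm1) measurable_const)
        (measurableSet_le measurable_const hm1)
    · refine Measurable.ite ?_ measurable_const measurable_const
      refine MeasurableSet.inter ?_
        (measurableSet_le measurable_const (measurable_const.sub hm3))
      show MeasurableSet {p : (Fin (γ-1) → ℝ) × (Fin ω → ℝ) | ∀ l : Fin (γ-1), 0 ≤ y +
            ∑ i ∈ Finset.univ.filter (fun i : Fin (γ-1) => (i : ℕ) ≤ (l : ℕ)),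
              (p.2 (Fin.castLE (by omega : γ-1 ≤ ω) i) - p.1 i)}
      rw [Set.setOf_forall]
      exact MeasurableSet.iInter fun l =>
        measurableSet_le measurable_const (measurable_const.add (hm2 l))
  have hFum : ∀ u, Measurable (F u) := fun u => hFmeas.comp measurable_prodMk_left
  have hFnn : ∀ u v, 0 ≤ F u v := by
    intro u v; simp only [hF_def]; split_ifs <;> norm_num
  have hFle : ∀ u v, ‖F u v‖ ≤ 1 := by
    intro u v; simp only [hF_def]; split_ifs <;> norm_num
  -- measurable sets, finite volumes
  have hUmeas : MeasurableSet U := by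
    rw [hU_def]; exact MeasurableSet.univ_pi fun i => measurableSet_Icc
  have hVmeas : MeasurableSet V := by
    rw [hV_def]; exact MeasurableSet.univ_pi fun i => measurableSet_Icc
  have hU'meas : MeasurableSet U' := by
    rw [hU'_def]; exact MeasurableSet.univ_pi fun i => measurableSet_Icc
  have hV'meas : MeasurableSet V' := by
    rw [hV'_def]; exact MeasurableSet.univ_pi fun i => measurableSet_Icc
  have hUfin : volume U ≠ ⊤ := by
    rw [hU_def]
    exact ((isCompact_univ_pi fun i => isCompact_Icc).measure_lt_top).ne
  have hVfin : volume V ≠ ⊤ := by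
    rw [hV_def]
    exact ((isCompact_univ_pi fun i => isCompact_Icc).measure_lt_top).ne
  have hU'fin : volume U' ≠ ⊤ := by
    rw [hU'_def]
    exact ((isCompact_univ_pi fun i => isCompact_Icc).measure_lt_top).ne
  have hV'fin : volume V' ≠ ⊤ := by
    rw [hV'_def]
    exact ((isCompact_univ_pi fun i => isCompact_Icc).measure_lt_top).ne
  have hFint : ∀ u, IntegrableOn (F u) V :=
    fun u => Measure.integrableOn_of_bounded hVfin (hFum u).aestronglyMeasurable
      (ae_of_all _ fun v => hFle u v)
  have hgsm : StronglyMeasurable g := by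
    rw [hg_def]
    exact MeasureTheory.StronglyMeasurable.integral_prod_right hFmeas.stronglyMeasurable
  have hgnn : ∀ u, 0 ≤ g u := by
    intro u
    rw [hg_def]
    exact integral_nonneg (hFnn u)
  have hgbd : ∀ u, ‖g u‖ ≤ 1 * (volume V).toReal := by
    intro u
    rw [hg_def]
    exact norm_setIntegral_le_of_norm_le_const (lt_top_iff_ne_top.mpr hVfin)
      (fun v _ => hFle u v)
  have hgint : IntegrableOn g U :=
    Measure.integrableOn_of_bounded hUfin hgsm.aestronglyMeasurable (ae_of_all _ hgbd)
  -- volumes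
  have hVolU' : (volume U').toReal = ε ^ (γ-1) := by
    rw [hU'_def, volume_pi_pi]
    simp only [Real.volume_Icc, sub_zero, Finset.prod_const, Finset.card_univ,
      Fintype.card_fin, ENNReal.toReal_pow, ENNReal.toReal_ofReal hε.le]
  have hVolV' : (volume V').toReal = ε ^ (γ-1) * (r * b ^ k) := by
    rw [hV'_def, volume_pi_pi]
    rw [Finset.prod_congr rfl fun (i : Fin ω) _ => (Real.volume_Icc : volume (Set.Icc (lo i) (hi i)) = ENNReal.ofReal (hi i - lo i)), ENNReal.toReal_prod]
    rw [Finset.prod_congr rfl fun (i : Fin ω) _ =>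
      ENNReal.toReal_ofReal (sub_nonneg.mpr (hlole i))]
    have h3 : ∀ i ∈ (Finset.univ : Finset (Fin ω)), hi i - lo i =
        if (i:ℕ) < γ - 1 then ε else if (i:ℕ) = γ - 1 then r else b := by
      intro i _; simp only [hlo_def, hhi_def]; split_ifs <;> ring
    rw [Finset.prod_congr rfl h3]
    rw [← Finset.prod_filter_mul_prod_filter_not Finset.univ
      (fun i : Fin ω => (i:ℕ) < γ - 1)]
    have h4 : ∏ i ∈ Finset.univ.filter (fun i : Fin ω => (i:ℕ) < γ - 1),
        (if (i:ℕ) < γ - 1 then ε else if (i:ℕ) = γ - 1 then r else b) = ε ^ (γ-1) := by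
      rw [Finset.prod_congr rfl fun i hi => if_pos (Finset.mem_filter.mp hi).2,
        Finset.prod_const, fin_filter_lt_card ω (γ-1) (by omega)]
    have h5 : ∏ i ∈ Finset.univ.filter (fun i : Fin ω => ¬ (i:ℕ) < γ - 1),
        (if (i:ℕ) < γ - 1 then ε else if (i:ℕ) = γ - 1 then r else b) = r * b ^ k := by
      rw [← Finset.prod_filter_mul_prod_filter_not
        (Finset.univ.filter fun i : Fin ω => ¬ (i:ℕ) < γ - 1) (fun i : Fin ω => (i:ℕ) = γ - 1)]
      have e1 : (Finset.univ.filter fun i : Fin ω => ¬ (i:ℕ) < γ - 1).filter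
          (fun i : Fin ω => (i:ℕ) = γ - 1) = {x₀} := by
        ext i
        simp only [Finset.mem_filter, Finset.mem_univ, true_and, Finset.mem_singleton,
          Fin.ext_iff, hx₀v]
        omega
      have e3 : (Finset.univ.filter fun i : Fin ω => ¬ (i:ℕ) < γ - 1).filter
          (fun i : Fin ω => ¬ (i:ℕ) = γ - 1) = Finset.univ.filter (fun i : Fin ω => γ ≤ (i:ℕ)) := by
        rw [Finset.filter_filter]
        apply Finset.filter_congr
        intro i _
        omega
      rw [e1, e3, Finset.prod_singleton]
      have e2 : (if (x₀:ℕ) < γ - 1 then ε else if (x₀:ℕ) = γ - 1 then r else b) = r := by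
        rw [if_neg (by omega), if_pos hx₀v]
      have e4 : ∀ i ∈ Finset.univ.filter (fun i : Fin ω => γ ≤ (i:ℕ)),
          (if (i:ℕ) < γ - 1 then ε else if (i:ℕ) = γ - 1 then r else b) = b := by
        intro i hi
        have hiγ := (Finset.mem_filter.mp hi).2
        rw [if_neg (by omega), if_neg (by omega)]
      rw [e2, Finset.prod_congr rfl e4, Finset.prod_const, fin_filter_le_card ω γ hγω,
        ← hk_def]
    rw [h4, h5]
  -- inner bound
  have hinner : ∀ u ∈ U', (volume V').toReal ≤ g u := by
    intro u hu
    have h1 : (1:ℝ) * (volume V').toReal ≤ ∫ v in V', F u v :=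
      setIntegral_ge_of_const_le_real hV'meas hV'fin (fun v hv => (hcore u hu v hv).ge)
        ((hFint u).mono_set hV'V)
    have h2 : ∫ v in V', F u v ≤ ∫ v in V, F u v :=
      setIntegral_mono_set (hFint u) (ae_of_all _ (hFnn u))
        (HasSubset.Subset.eventuallyLE hV'V)
    rw [hg_def]
    linarith
  -- outer bound
  have houter : (volume V').toReal * (volume U').toReal ≤ ∫ u in U, g u := by
    have h1 : (volume V').toReal * (volume U').toReal ≤ ∫ u in U', g u :=
      setIntegral_ge_of_const_le_real hU'meas hU'fin hinner (hgint.mono_set hU'U)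
    have h2 : ∫ u in U', g u ≤ ∫ u in U, g u :=
      setIntegral_mono_set hgint (ae_of_all _ hgnn)
        (HasSubset.Subset.eventuallyLE hU'U)
    linarith
  -- arithmetic
  have harith : ε ^ (2*(γ-1)) * r * (ε/(↑ω*T))^k / T^(m₀-k) * t ^ m₀
      ≤ (volume V').toReal * (volume U').toReal := by
    rw [hVolU', hVolV']
    have hx : ε ^ (2*(γ-1)) = ε ^ (γ-1) * ε ^ (γ-1) := by rw [two_mul, pow_add]
    have h1 : ε * t / (↑ω * T) ≤ b := by
      have hminT : ε * t / T ≤ min t ε := by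
        rcases le_total t ε with h | h
        · rw [min_eq_left h, div_le_iff₀ hT]
          nlinarith
        · rw [min_eq_right h, div_le_iff₀ hT]
          nlinarith
      rw [mul_comm (ω:ℝ) T, ← div_div, hb_def]
      exact (div_le_div_iff_of_pos_right hωR).mpr hminT
    have h2 : (ε/(↑ω*T))^k * t^k ≤ b^k := by
      rw [← mul_pow]
      apply pow_le_pow_left₀ (mul_nonneg (div_nonneg hε.le (mul_nonneg hωR.le hT.le)) ht0)
      rw [div_mul_eq_mul_div]
      exact h1
    have h3 : t^m₀ ≤ t^k * T^(m₀-k) := by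
      have hkm : k + (m₀ - k) = m₀ := by omega
      calc t^m₀ = t^k * t^(m₀-k) := by rw [← pow_add, hkm]
        _ ≤ t^k * T^(m₀-k) :=
          mul_le_mul_of_nonneg_left (pow_le_pow_left₀ ht0 htT _) (pow_nonneg ht0 _)
    have hTk : (0:ℝ) < T^(m₀-k) := pow_pos hT _
    have hDnn : (0:ℝ) ≤ ε ^ (γ-1) * ε ^ (γ-1) * r :=
      mul_nonneg (mul_nonneg (pow_nonneg hε.le _) (pow_nonneg hε.le _)) hr.le
    calc ε ^ (2*(γ-1)) * r * (ε/(↑ω*T))^k / T^(m₀-k) * t ^ m₀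
        = (ε^(γ-1) * ε^(γ-1) * r) * ((ε/(↑ω*T))^k * (t^m₀ / T^(m₀-k))) := by
          rw [hx]; ring
      _ ≤ (ε^(γ-1) * ε^(γ-1) * r) * ((ε/(↑ω*T))^k * (t^k * T^(m₀-k) / T^(m₀-k))) := by
          apply mul_le_mul_of_nonneg_left ?_ hDnn
          apply mul_le_mul_of_nonneg_left ?_
            (pow_nonneg (div_nonneg hε.le (mul_nonneg hωR.le hT.le)) _)
          exact (div_le_div_iff_of_pos_right hTk).mpr h3
      _ = (ε^(γ-1) * ε^(γ-1) * r) * ((ε/(↑ω*T))^k * t^k) := by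
          rw [mul_div_assoc, div_self hTk.ne', mul_one]
      _ ≤ (ε^(γ-1) * ε^(γ-1) * r) * b^k := mul_le_mul_of_nonneg_left h2 hDnn
      _ = ε ^ (γ-1) * (r * b ^ k) * ε ^ (γ-1) := by ring
  exact harith.trans houter
end
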